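/- arXiv:2507.00562 — 3 statements merged into one kernel-verified Lean document; each statement's English description precedes it below -/
import Mathlib

section
/- Let the trap configuration satisfy the quadratic recursion with constant c, where |I_1|^{-1} < c < 1. Then the expected survival time of the trapped random walk is finite: 𝔼(τ) < ∞. -/
open MeasureTheory ENNReal Set

noncomputable section

/-- A trap configuration: a trap at the origin and infinitely many traps. -/
def IsTrapConfig (ω : ℕ → Bool) : Prop :=
  ω 0 = true ∧ {x : ℕ | ω x = true}.Infinite

/-- The location `x_i` of the `i`-th trap (traps enumerated in increasing order, `x_0 = 0`). -/
def trapLoc (ω : ℕ → Bool) (i : ℕ) : ℕ :=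
  Nat.nth (fun x => ω x = true) i

/-- The length `|I_i| = x_i - x_{i-1}` of the `i`-th interval between traps, for `i ≥ 1`. -/
def gapLen (ω : ℕ → Bool) (i : ℕ) : ℕ :=
  trapLoc ω i - trapLoc ω (i - 1)

/-- The landscape satisfies the quadratic recursion `|I_{j+1}| = c * |I_j|^2` for all `j ≥ 1`. -/
def QuadRec (ω : ℕ → Bool) (c : ℝ) : Prop :=
  ∀ j : ℕ, 1 ≤ j → (gapLen ω (j + 1) : ℝ) = c * (gapLen ω j : ℝ) ^ 2

/-- One-step transition probabilities of the trapped random walk on `ℕ ∪ {*}`,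
where `none` plays the role of the absorbing cemetery state `*`. -/
def transProb (ω : ℕ → Bool) : Option ℕ → Option ℕ → ℝ
  | none, none => 1
  | none, some _ => 0
  | some x, none => if ω x = true then 1 / 3 else 0
  | some x, some y =>
    if x = 0 then (if y = 1 then 2 / 3 else 0)
    else if ω x = true then (if y = x - 1 ∨ y = x + 1 then 1 / 3 else 0)
    else (if y = x - 1 ∨ y = x + 1 then 1 / 2 else 0)

/-- `S` is (a version of) the trapped random walk in the landscape `ω` under the probability
measure `P`: it starts at `0` and is a Markov chain with transition probabilities `transProb ω`. -/
def IsTrappedRW (ω : ℕ → Bool) {Ω : Type*} [MeasurableSpace Ω]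
    (P : Measure Ω) (S : ℕ → Ω → Option ℕ) : Prop :=
  IsProbabilityMeasure P ∧
  (∀ (n : ℕ) (y : Option ℕ), MeasurableSet {a | S n a = y}) ∧
  P {a | S 0 a = some 0} = 1 ∧
  ∀ (n : ℕ) (path : ℕ → Option ℕ) (y : Option ℕ),
    P {a | (∀ i ≤ n, S i a = path i) ∧ S (n + 1) a = y}
      = ENNReal.ofReal (transProb ω (path n) y) * P {a | ∀ i ≤ n, S i a = path i}

/-- The survival time `τ = inf {k : S k = *}`, valued in `ℕ∞`. -/
def survivalTime {Ω : Type*} (S : ℕ → Ω → Option ℕ) (a : Ω) : ℕ∞ :=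
  sInf {t : ℕ∞ | ∃ k : ℕ, (k : ℕ∞) = t ∧ S k a = none}

/-- The expected survival time `𝔼(τ)`, valued in `ℝ≥0∞`. -/
def expSurvival {Ω : Type*} [MeasurableSpace Ω] (P : Measure Ω)
    (S : ℕ → Ω → Option ℕ) : ℝ≥0∞ :=
  ∫⁻ a, ((survivalTime S a : ℕ∞) : ℝ≥0∞) ∂P

/-- Two landscapes are similar in the tail. -/
def SimilarInTail (ω₁ ω₂ : ℕ → Bool) : Prop :=
  ∃ p₁ p₂ : ℕ, ∀ x : ℕ, ω₁ (p₁ + x) = ω₂ (p₂ + x)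

/-- Indicator that a state is a trap site. -/
def trapInd (ω : ℕ → Bool) : Option ℕ → Bool
  | none => false
  | some x => ω x

/-- Number of visits to the trap set at times `1, …, k`. -/
def visitCount {Ω : Type*} (ω : ℕ → Bool) (S : ℕ → Ω → Option ℕ) (a : Ω) (k : ℕ) : ℕ :=
  ((Finset.Icc 1 k).filter fun j => trapInd ω (S j a) = true).card

/-- `N`, the total number of visits to the trap set at times `≥ 1` (before absorption). -/
def numVisits {Ω : Type*} (ω : ℕ → Bool) (S : ℕ → Ω → Option ℕ) (a : Ω) : ℕ∞ :=
  ⨆ k : ℕ, (visitCount ω S a k : ℕ∞)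

/-- The hitting times `𝒯_i`: `𝒯_0 = 0` and `𝒯_i = inf {k ≥ 1 : #visits to D in [1,k] = i}`. -/
def hitTime {Ω : Type*} (ω : ℕ → Bool) (S : ℕ → Ω → Option ℕ) (i : ℕ) (a : Ω) : ℕ∞ :=
  if i = 0 then 0
  else sInf {t : ℕ∞ | ∃ k : ℕ, (k : ℕ∞) = t ∧ 1 ≤ k ∧ visitCount ω S a k = i}

/-- The inter-arrival times `Y_i = 𝒯_i - 𝒯_{i-1}` for `1 ≤ i ≤ N`, and `Y_i = 0` for `i > N`. -/
def interArrival {Ω : Type*} (ω : ℕ → Bool) (S : ℕ → Ω → Option ℕ) (i : ℕ) (a : Ω) : ℕ∞ :=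
  if 1 ≤ i ∧ (i : ℕ∞) ≤ numVisits ω S a
  then hitTime ω S i a - hitTime ω S (i - 1) a else 0

/-- `Y_i` viewed as an `ℝ≥0∞`-valued random variable. -/
def Yfun {Ω : Type*} (ω : ℕ → Bool) (S : ℕ → Ω → Option ℕ) (i : ℕ) (a : Ω) : ℝ≥0∞ :=
  ((interArrival ω S i a : ℕ∞) : ℝ≥0∞)

/-- The embedded walk `ξ_j = S_{𝒯_j}` for `j ≤ N`, and `ξ_j = *` for `j > N`. -/
def embWalk {Ω : Type*} (ω : ℕ → Bool) (S : ℕ → Ω → Option ℕ) (j : ℕ) (a : Ω) : Option ℕ :=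
  if (j : ℕ∞) ≤ numVisits ω S a then S (hitTime ω S j a).toNat a else none

/-- Sign of the increment of the embedded walk (an arbitrary junk value `2` is produced
if one of the two states is the cemetery state). -/
def stepSign : Option ℕ → Option ℕ → ℤ
  | some x, some y => Int.sign ((y : ℤ) - (x : ℤ))
  | _, _ => 2

/-- `κ` belongs to `𝒦`: entries `κ_1, …, κ_{i-1}` lie in `{-1,0,1}` and all partial sums
are nonnegative. -/
def InKappaSet (i : ℕ) (κ : ℕ → ℤ) : Prop :=
  (∀ j : ℕ, 1 ≤ j → j ≤ i - 1 → κ j = -1 ∨ κ j = 0 ∨ κ j = 1) ∧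
  ∀ m : ℕ, 1 ≤ m → m ≤ i - 1 → 0 ≤ ∑ n ∈ Finset.Icc 1 m, κ n

/-- The event `A_κ`: the walk visits at least `i-1` traps and the embedded walk moves
according to `κ` (for `i = 1` this is the whole sample space). -/
def eventA {Ω : Type*} (ω : ℕ → Bool) (S : ℕ → Ω → Option ℕ) (i : ℕ) (κ : ℕ → ℤ) : Set Ω :=
  {a | ((i - 1 : ℕ) : ℕ∞) ≤ numVisits ω S a ∧
    ∀ j : ℕ, 1 ≤ j → j ≤ i - 1 →
      stepSign (embWalk ω S (j - 1) a) (embWalk ω S j a) = κ j}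

/-- The event `A_κ⁺ = A_κ ∩ {S_{𝒯_{i-1}+1} = S_{𝒯_{i-1}} + 1}` (the whole sample space
for `i = 1`). -/
def eventAplus {Ω : Type*} (ω : ℕ → Bool) (S : ℕ → Ω → Option ℕ) (i : ℕ) (κ : ℕ → ℤ) :
    Set Ω :=
  if i = 1 then Set.univ
  else eventA ω S i κ ∩
    {a | ∃ x : ℕ, S (hitTime ω S (i - 1) a).toNat a = some x ∧
      S ((hitTime ω S (i - 1) a).toNat + 1) a = some (x + 1)}

/-- Conditional expectation `𝔼(f | A)` of an `ℝ≥0∞`-valued function given an event `A`. -/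
def condExpOn {Ω : Type*} [MeasurableSpace Ω] (P : Measure Ω) (A : Set Ω)
    (f : Ω → ℝ≥0∞) : ℝ≥0∞ :=
  (∫⁻ a in A, f a ∂P) / P A

/-- Conditional probability `ℙ(A | B)`. -/
def condProb {Ω : Type*} [MeasurableSpace Ω] (P : Measure Ω) (A B : Set Ω) : ℝ≥0∞ :=
  P (A ∩ B) / P B

/-- Crossing times between `b` and `b+1`, shifted by one: `crossTime S b 0 = l_{-1} = 0`,
`crossTime S b (n+1) = l_n` where `l_0 = inf {t : S t = b}` and `l_i` alternately hits
`b+1` and `b`. -/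
def crossTime {Ω : Type*} (S : ℕ → Ω → Option ℕ) (b : ℕ) : ℕ → Ω → ℕ∞
  | 0, _ => 0
  | 1, a => sInf {t : ℕ∞ | ∃ k : ℕ, (k : ℕ∞) = t ∧ S k a = some b}
  | n + 2, a =>
    if crossTime S b (n + 1) a = ⊤ then ⊤
    else
      sInf {t : ℕ∞ | ∃ k : ℕ, (k : ℕ∞) = t ∧ crossTime S b (n + 1) a ≤ (k : ℕ∞) ∧
        S k a = some (if S (crossTime S b (n + 1) a).toNat a = some b then b + 1 else b)}

/-- `T_n = τ ∧ l_n - τ ∧ l_{n-1}` (with the index shift `l_n = crossTime S b (n+1)`). -/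
def crossDur {Ω : Type*} (S : ℕ → Ω → Option ℕ) (b : ℕ) (n : ℕ) (a : Ω) : ℕ∞ :=
  min (survivalTime S a) (crossTime S b (n + 1) a)
    - min (survivalTime S a) (crossTime S b n a)

/-- `ℰ_0 = 𝔼[T_0]`. -/
def cE0 {Ω : Type*} [MeasurableSpace Ω] (P : Measure Ω) (S : ℕ → Ω → Option ℕ)
    (b : ℕ) : ℝ≥0∞ :=
  ∫⁻ a, ((crossDur S b 0 a : ℕ∞) : ℝ≥0∞) ∂P

/-- `𝒫_0 = ℙ(l_0 < ∞)`. -/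
def cP0 {Ω : Type*} [MeasurableSpace Ω] (P : Measure Ω) (S : ℕ → Ω → Option ℕ)
    (b : ℕ) : ℝ≥0∞ :=
  P {a | crossTime S b 1 a ≠ ⊤}

/-- `ℰ₊ = 𝔼[T_2 | l_1 < ∞]`. -/
def cEplus {Ω : Type*} [MeasurableSpace Ω] (P : Measure Ω) (S : ℕ → Ω → Option ℕ)
    (b : ℕ) : ℝ≥0∞ :=
  condExpOn P {a | crossTime S b 2 a ≠ ⊤} (fun a => ((crossDur S b 2 a : ℕ∞) : ℝ≥0∞))

/-- `ℰ₋ = 𝔼[T_3 | l_2 < ∞]`. -/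
def cEminus {Ω : Type*} [MeasurableSpace Ω] (P : Measure Ω) (S : ℕ → Ω → Option ℕ)
    (b : ℕ) : ℝ≥0∞ :=
  condExpOn P {a | crossTime S b 3 a ≠ ⊤} (fun a => ((crossDur S b 3 a : ℕ∞) : ℝ≥0∞))

/-- `𝒫₊ = ℙ(l_2 < ∞ | l_1 < ∞)`. -/
def cPplus {Ω : Type*} [MeasurableSpace Ω] (P : Measure Ω) (S : ℕ → Ω → Option ℕ)
    (b : ℕ) : ℝ≥0∞ :=
  P {a | crossTime S b 3 a ≠ ⊤} / P {a | crossTime S b 2 a ≠ ⊤}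

/-- `𝒫₋ = ℙ(l_3 < ∞ | l_2 < ∞)`. -/
def cPminus {Ω : Type*} [MeasurableSpace Ω] (P : Measure Ω) (S : ℕ → Ω → Option ℕ)
    (b : ℕ) : ℝ≥0∞ :=
  P {a | crossTime S b 4 a ≠ ⊤} / P {a | crossTime S b 3 a ≠ ⊤}

/-- `ω₂` is obtained from `ω₁` by lengthening the `k`-th interval by one site. -/
def IsLengthened (ω₁ ω₂ : ℕ → Bool) (k : ℕ) : Prop :=
  (∀ x : ℕ, x ≤ trapLoc ω₁ (k - 1) → ω₂ x = ω₁ x) ∧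
  ω₂ (trapLoc ω₁ (k - 1) + 1) = false ∧
  ∀ x : ℕ, trapLoc ω₁ (k - 1) + 1 < x → ω₂ x = ω₁ (x - 1)

end



section AuxTrappedRW

open MeasureTheory ENNReal Set

namespace TrappedRWAux

private def extFn {n : ℕ} (p : Fin (n + 1) → Option ℕ) : ℕ → Option ℕ :=
  fun i => if h : i < n + 1 then p ⟨i, h⟩ else none

private lemma extFn_apply {n : ℕ} (p : Fin (n + 1) → Option ℕ) {i : ℕ} (h : i ≤ n) :
    extFn p i = p ⟨i, Nat.lt_succ_of_le h⟩ := dif_pos _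

variable {Ω : Type*} [MeasurableSpace Ω]

private theorem one_step (ω : ℕ → Bool) (P : Measure Ω) (S : ℕ → Ω → Option ℕ)
    (hS : IsTrappedRW ω P S) (n : ℕ) (x y : Option ℕ) :
    P {a | S n a = x ∧ S (n + 1) a = y}
      = ENNReal.ofReal (transProb ω x y) * P {a | S n a = x} := by
  classical
  obtain ⟨hP, hmeas, hinit, hmark⟩ := hS
  set ι := {p : Fin (n + 1) → Option ℕ // p (Fin.last n) = x} with hι
  let C : ι → Set Ω := fun p => {a | ∀ i ≤ n, S i a = extFn p.1 i}
  have hCmeas : ∀ p : ι, MeasurableSet (C p) := by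
    intro p
    have hEq : C p = ⋂ (i : ℕ) (_ : i ≤ n), {a | S i a = extFn p.1 i} := by
      ext a; simp [C]
    rw [hEq]
    exact MeasurableSet.iInter fun i => MeasurableSet.iInter fun _ => hmeas i _
  have hdisj : Pairwise (Function.onFun Disjoint C) := by
    intro p q hpq
    rw [Function.onFun, Set.disjoint_left]
    intro a hap haq
    apply hpq
    apply Subtype.ext; funext i
    have h1 := hap i.1 (Fin.is_le i)
    have h2 := haq i.1 (Fin.is_le i)
    rw [extFn_apply _ (Fin.is_le i)] at h1 h2
    have h3 := h1.symm.trans h2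
    simpa using h3
  have hcover : (⋃ p : ι, C p) = {a | S n a = x} := by
    ext a
    simp only [Set.mem_iUnion, Set.mem_setOf_eq]
    constructor
    · rintro ⟨p, hp⟩
      have h1 := hp n le_rfl
      rw [extFn_apply _ le_rfl] at h1
      rw [h1]
      exact p.2
    · intro ha
      refine ⟨⟨fun i => S i.1 a, ?_⟩, ?_⟩
      · simpa using ha
      · intro i hi
        rw [extFn_apply _ hi]
  have hDmeas : ∀ p : ι,
      MeasurableSet {a | (∀ i ≤ n, S i a = extFn p.1 i) ∧ S (n + 1) a = y} := by
    intro p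
    rw [Set.setOf_and]
    exact (hCmeas p).inter (hmeas (n + 1) y)
  have hDdisj : Pairwise (Function.onFun Disjoint
      (fun p : ι => {a | (∀ i ≤ n, S i a = extFn p.1 i) ∧ S (n + 1) a = y})) := by
    intro p q hpq
    have h1 := hdisj hpq
    rw [Function.onFun] at h1 ⊢
    refine Disjoint.mono ?_ ?_ h1 <;>
      · intro a ha
        exact ha.1
  have hkey : {a | S n a = x ∧ S (n + 1) a = y}
      = ⋃ p : ι, {a | (∀ i ≤ n, S i a = extFn p.1 i) ∧ S (n + 1) a = y} := by
    ext a
    simp only [Set.mem_iUnion, Set.mem_setOf_eq]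
    constructor
    · rintro ⟨hx, hy⟩
      have : a ∈ ⋃ p : ι, C p := by rw [hcover]; exact hx
      rcases Set.mem_iUnion.mp this with ⟨p, hp⟩
      exact ⟨p, hp, hy⟩
    · rintro ⟨p, hp, hy⟩
      have : a ∈ ⋃ p : ι, C p := Set.mem_iUnion.mpr ⟨p, hp⟩
      rw [hcover] at this
      exact ⟨this, hy⟩
  calc P {a | S n a = x ∧ S (n + 1) a = y}
      = ∑' p : ι, P {a | (∀ i ≤ n, S i a = extFn p.1 i) ∧ S (n + 1) a = y} := by
        rw [hkey, measure_iUnion hDdisj hDmeas]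
    _ = ∑' p : ι, ENNReal.ofReal (transProb ω x y) * P (C p) := by
        refine tsum_congr fun p => ?_
        have h := hmark n (extFn p.1) y
        have hx : extFn p.1 n = x := by
          rw [extFn_apply _ le_rfl]
          exact p.2
        rw [hx] at h
        exact h
    _ = ENNReal.ofReal (transProb ω x y) * P {a | S n a = x} := by
        rw [ENNReal.tsum_mul_left, ← measure_iUnion hdisj hCmeas, hcover]

private theorem decomp_prev (P : Measure Ω) (S : ℕ → Ω → Option ℕ)
    (hmeas : ∀ (n : ℕ) (y : Option ℕ), MeasurableSet {a | S n a = y}) (n : ℕ) (y : Option ℕ) :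
    P {a | S (n + 1) a = y} = ∑' x : Option ℕ, P {a | S n a = x ∧ S (n + 1) a = y} := by
  have hU : {a | S (n + 1) a = y} = ⋃ x : Option ℕ, {a | S n a = x ∧ S (n + 1) a = y} := by
    ext a
    simp only [Set.mem_iUnion, Set.mem_setOf_eq]
    constructor
    · intro h; exact ⟨S n a, rfl, h⟩
    · rintro ⟨x, _, h⟩; exact h
  rw [hU]
  refine measure_iUnion ?_ ?_
  · intro p q hpq
    rw [Function.onFun, Set.disjoint_left]
    rintro a ⟨h1, _⟩ ⟨h2, _⟩
    exact hpq (h1.symm.trans h2)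
  · intro x
    rw [Set.setOf_and]
    exact (hmeas n x).inter (hmeas (n + 1) y)

private theorem alive_decomp (P : Measure Ω) (S : ℕ → Ω → Option ℕ)
    (hmeas : ∀ (n : ℕ) (y : Option ℕ), MeasurableSet {a | S n a = y}) (n : ℕ) :
    P {a | S n a ≠ none} = ∑' z : ℕ, P {a | S n a = some z} := by
  have hU : {a | S n a ≠ none} = ⋃ z : ℕ, {a | S n a = some z} := by
    ext a
    simp only [Set.mem_iUnion, Set.mem_setOf_eq]
    exact Option.ne_none_iff_exists'
  rw [hU]
  refine measure_iUnion ?_ (fun z => hmeas n (some z))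
  intro p q hpq
  rw [Function.onFun, Set.disjoint_left]
  intro a h1 h2
  simp only [Set.mem_setOf_eq] at h1 h2
  rw [h1] at h2
  exact hpq (Option.some_injective _ h2)

theorem aux_main (ω : ℕ → Bool) (P : Measure Ω) (S : ℕ → Ω → Option ℕ)
    (hS : IsTrappedRW ω P S) (fh : ℕ → ℝ≥0∞) (hfh0 : fh 0 ≠ ⊤)
    (hdrift : ∀ x : ℕ,
      (∑' z : ℕ, ENNReal.ofReal (transProb ω (some x) (some z)) * fh z) + 1 ≤ fh x) :
    expSurvival P S < ⊤ := by
  classical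
  obtain ⟨hP, hmeas, hinit, hmark⟩ := hS
  haveI := hP
  set μ : ℕ → ℕ → ℝ≥0∞ := fun n z => P {a | S n a = some z} with hμ
  set T : ℕ → ℕ → ℝ≥0∞ := fun x z => ENNReal.ofReal (transProb ω (some x) (some z)) with hT
  have hrec : ∀ n z, μ (n + 1) z = ∑' x : ℕ, T x z * μ n x := by
    intro n z
    have h1 := decomp_prev P S hmeas n (some z)
    have h2 : ∀ x : Option ℕ, P {a | S n a = x ∧ S (n + 1) a = some z}
        = ENNReal.ofReal (transProb ω x (some z)) * P {a | S n a = x} :=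
      fun x => one_step ω P S ⟨hP, hmeas, hinit, hmark⟩ n x (some z)
    have h3 : μ (n + 1) z
        = ∑' x : Option ℕ, ENNReal.ofReal (transProb ω x (some z)) * P {a | S n a = x} := by
      rw [hμ]; simp only []
      rw [h1]
      exact tsum_congr h2
    rw [h3]
    refine (Function.Injective.tsum_eq (Option.some_injective ℕ) ?_).symm
    intro x hx
    rcases x with _ | x
    · exfalso
      apply hx
      have : transProb ω none (some z) = 0 := rfl
      simp [Function.mem_support, this]
    · exact ⟨x, rfl⟩
  set F : ℕ → ℝ≥0∞ := fun n => ∑' z : ℕ, fh z * μ n z with hF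
  set q : ℕ → ℝ≥0∞ := fun n => ∑' z : ℕ, μ n z with hq
  have hFq : ∀ n, F (n + 1) + q n ≤ F n := by
    intro n
    have h1 : F (n + 1) = ∑' x : ℕ, (∑' z : ℕ, T x z * fh z) * μ n x := by
      rw [hF]; simp only []
      calc ∑' z : ℕ, fh z * μ (n + 1) z
          = ∑' z : ℕ, ∑' x : ℕ, fh z * (T x z * μ n x) := by
            refine tsum_congr fun z => ?_
            rw [hrec n z, ENNReal.tsum_mul_left]
        _ = ∑' x : ℕ, ∑' z : ℕ, fh z * (T x z * μ n x) := ENNReal.tsum_comm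
        _ = ∑' x : ℕ, (∑' z : ℕ, T x z * fh z) * μ n x := by
            refine tsum_congr fun x => ?_
            rw [← ENNReal.tsum_mul_right]
            refine tsum_congr fun z => ?_
            ring
    rw [h1]
    have h2 : q n = ∑' x : ℕ, μ n x := rfl
    rw [h2, ← ENNReal.tsum_add]
    calc ∑' x : ℕ, ((∑' z : ℕ, T x z * fh z) * μ n x + μ n x)
        = ∑' x : ℕ, ((∑' z : ℕ, T x z * fh z) + 1) * μ n x := by
          refine tsum_congr fun x => ?_
          ring
      _ ≤ ∑' x : ℕ, fh x * μ n x :=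
          ENNReal.tsum_le_tsum fun x => mul_le_mul_left (hdrift x) _
  have hsum : ∀ N : ℕ, F N + ∑ k ∈ Finset.range N, q k ≤ F 0 := by
    intro N
    induction N with
    | zero => simp
    | succ N ih =>
        calc F (N + 1) + ∑ k ∈ Finset.range (N + 1), q k
            = (F (N + 1) + q N) + ∑ k ∈ Finset.range N, q k := by
              rw [Finset.sum_range_succ]; ring
          _ ≤ F N + ∑ k ∈ Finset.range N, q k := add_le_add_left (hFq N) _
          _ ≤ F 0 := ih
  have hqsum : ∑' n : ℕ, q n ≤ F 0 := by
    rw [ENNReal.tsum_eq_iSup_nat]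
    refine iSup_le fun N => ?_
    calc ∑ k ∈ Finset.range N, q k ≤ F N + ∑ k ∈ Finset.range N, q k := le_add_self
      _ ≤ F 0 := hsum N
  have hF0 : F 0 = fh 0 := by
    have hz : ∀ z : ℕ, z ≠ 0 → μ 0 z = 0 := by
      intro z hz0
      have hsub : {a | S 0 a = some z} ⊆ {a | S 0 a = some 0}ᶜ := by
        intro a ha hb
        simp only [Set.mem_setOf_eq] at ha
        simp only [Set.mem_compl_iff, Set.mem_setOf_eq] at hb
        rw [ha] at hb
        exact hz0 (Option.some_injective _ hb)
      have hc : P {a | S 0 a = some 0}ᶜ = 0 := by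
        rw [prob_compl_eq_zero_iff (hmeas 0 (some 0))]
        exact hinit
      exact le_antisymm (hc ▸ measure_mono hsub) zero_le
    rw [hF]; simp only []
    rw [tsum_eq_single 0 (fun z hz0 => by rw [hz z hz0, mul_zero])]
    have h00 : μ 0 0 = 1 := hinit
    rw [h00, mul_one]
  -- survival time
  have hEmeasEq : ∀ n : ℕ, {a | (n : ℕ∞) < survivalTime S a}
      = ⋂ (k : ℕ) (_ : k ≤ n), {a | S k a = none}ᶜ := by
    intro n
    ext a
    simp only [Set.mem_setOf_eq, Set.mem_iInter, Set.mem_compl_iff]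
    constructor
    · intro h k hk hnone
      have h1 : survivalTime S a ≤ (k : ℕ∞) := sInf_le ⟨k, rfl, hnone⟩
      have h2 : (k : ℕ∞) ≤ (n : ℕ∞) := by exact_mod_cast hk
      exact absurd (lt_of_lt_of_le (lt_of_lt_of_le h h1) h2) (lt_irrefl _)
    · intro h
      rcases Set.eq_empty_or_nonempty {t : ℕ∞ | ∃ k : ℕ, (k : ℕ∞) = t ∧ S k a = none} with he | hne
      · rw [survivalTime, he, sInf_empty]
        exact_mod_cast WithTop.coe_lt_top n
      · have hmem := csInf_mem hne
        rcases hmem with ⟨k, hk, hnone⟩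
        rw [survivalTime]
        rw [← hk]
        have : ¬ k ≤ n := fun hkn => h k hkn hnone
        exact_mod_cast Nat.lt_of_not_le this
  have hEmeas : ∀ n : ℕ, MeasurableSet {a | (n : ℕ∞) < survivalTime S a} := by
    intro n
    rw [hEmeasEq n]
    exact MeasurableSet.iInter fun k => MeasurableSet.iInter fun _ => (hmeas k none).compl
  have key : ∀ t : ℕ∞, ((t : ℕ∞) : ℝ≥0∞)
      = ∑' n : ℕ, if (n : ℕ∞) < t then (1 : ℝ≥0∞) else 0 := by
    intro t
    induction t using ENat.recTopCoe with
    | top =>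
        have h1 : ∀ n : ℕ, (if ((n : ℕ∞) < (⊤ : ℕ∞)) then (1 : ℝ≥0∞) else 0) = 1 := by
          intro n
          rw [if_pos]
          exact_mod_cast WithTop.coe_lt_top n
        rw [tsum_congr h1]
        have h2 : ∑' (_ : ℕ), (1 : ℝ≥0∞) = ⊤ :=
          ENNReal.tsum_const_eq_top_of_ne_zero one_ne_zero
        rw [h2]
        simp
    | coe m =>
        have hcond : ∀ n : ℕ, ((n : ℕ∞) < (m : ℕ∞)) ↔ n < m := by
          intro n; exact_mod_cast Iff.rfl
        have hz : ∀ n ∉ Finset.range m, (if (n : ℕ∞) < (m : ℕ∞) then (1 : ℝ≥0∞) else 0) = 0 := by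
          intro n hn
          rw [if_neg]
          rw [hcond]
          simpa using hn
        rw [tsum_eq_sum hz]
        have h3 : ∀ n ∈ Finset.range m, (if (n : ℕ∞) < (m : ℕ∞) then (1 : ℝ≥0∞) else 0) = 1 := by
          intro n hn
          rw [if_pos]
          rw [hcond]
          simpa using hn
        rw [Finset.sum_congr rfl h3]
        simp
  have hpoint : ∀ a : Ω, ((survivalTime S a : ℕ∞) : ℝ≥0∞)
      = ∑' n : ℕ, Set.indicator {a' | (n : ℕ∞) < survivalTime S a'} (fun _ => (1 : ℝ≥0∞)) a := by
    intro a
    rw [key (survivalTime S a)]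
    refine tsum_congr fun n => ?_
    by_cases h : (n : ℕ∞) < survivalTime S a
    · rw [if_pos h]
      exact (Set.indicator_of_mem (show a ∈ {a' | (n : ℕ∞) < survivalTime S a'} from h)
        (fun _ => (1 : ℝ≥0∞))).symm
    · rw [if_neg h]
      exact (Set.indicator_of_notMem
        (show a ∉ {a' | (n : ℕ∞) < survivalTime S a'} from h) (fun _ => (1 : ℝ≥0∞))).symm
  have hlayer : expSurvival P S = ∑' n : ℕ, P {a | (n : ℕ∞) < survivalTime S a} := by
    rw [expSurvival]
    calc ∫⁻ a, ((survivalTime S a : ℕ∞) : ℝ≥0∞) ∂P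
        = ∫⁻ a, ∑' n : ℕ, Set.indicator {a' | (n : ℕ∞) < survivalTime S a'}
            (fun _ => (1 : ℝ≥0∞)) a ∂P := by
          exact lintegral_congr hpoint
      _ = ∑' n : ℕ, ∫⁻ a, Set.indicator {a' | (n : ℕ∞) < survivalTime S a'}
            (fun _ => (1 : ℝ≥0∞)) a ∂P := by
          refine lintegral_tsum fun n => ?_
          exact ((measurable_const.indicator (hEmeas n))).aemeasurable
      _ = ∑' n : ℕ, P {a | (n : ℕ∞) < survivalTime S a} := by
          refine tsum_congr fun n => ?_
          exact lintegral_indicator_one (hEmeas n)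
  have hPq : ∀ n : ℕ, P {a | (n : ℕ∞) < survivalTime S a} ≤ q n := by
    intro n
    have hsub : {a | (n : ℕ∞) < survivalTime S a} ⊆ {a | S n a ≠ none} := by
      intro a ha
      simp only [Set.mem_setOf_eq] at ha ⊢
      intro hnone
      have h1 : survivalTime S a ≤ (n : ℕ∞) := sInf_le ⟨n, rfl, hnone⟩
      exact absurd (lt_of_lt_of_le ha h1) (lt_irrefl _)
    calc P {a | (n : ℕ∞) < survivalTime S a} ≤ P {a | S n a ≠ none} := measure_mono hsub
      _ = q n := alive_decomp P S hmeas n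
  calc expSurvival P S = ∑' n : ℕ, P {a | (n : ℕ∞) < survivalTime S a} := hlayer
    _ ≤ ∑' n : ℕ, q n := ENNReal.tsum_le_tsum hPq
    _ ≤ F 0 := hqsum
    _ = fh 0 := hF0
    _ < ⊤ := lt_top_iff_ne_top.mpr hfh0


private noncomputable def idx (ω : ℕ → Bool) (x : ℕ) : ℕ :=
  Nat.findGreatest (fun i => trapLoc ω i ≤ x) x

private noncomputable def Gr (ω : ℕ → Bool) (j : ℕ) : ℝ := (gapLen ω j : ℝ)

private noncomputable def Af (ω : ℕ → Bool) (c : ℝ) (j : ℕ) : ℝ :=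
  (2 / (1 - c)) * Gr ω (max j 1 + 1) + 1

private noncomputable def fLya (ω : ℕ → Bool) (c : ℝ) (x : ℕ) : ℝ :=
  Af ω c (idx ω x)
    + (Af ω c (idx ω x + 1) - Af ω c (idx ω x)) * ((x : ℝ) - (trapLoc ω (idx ω x) : ℝ))
        / Gr ω (idx ω x + 1)
    + ((x : ℝ) - (trapLoc ω (idx ω x) : ℝ)) * ((trapLoc ω (idx ω x + 1) : ℝ) - (x : ℝ))

theorem exists_lyapunov (ω : ℕ → Bool) (hω : IsTrapConfig ω) (c : ℝ) (hrec : QuadRec ω c)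
    (hc_low : ((gapLen ω 1 : ℝ))⁻¹ < c) (hc_up : c < 1) :
    ∃ fh : ℕ → ℝ≥0∞, fh 0 ≠ ⊤ ∧ ∀ x : ℕ,
      (∑' z : ℕ, ENNReal.ofReal (transProb ω (some x) (some z)) * fh z) + 1 ≤ fh x := by
  classical
  obtain ⟨h0, hinf⟩ := hω
  have hmono : StrictMono (trapLoc ω) := by
    unfold trapLoc
    exact Nat.nth_strictMono hinf
  have hx0 : trapLoc ω 0 = 0 := by
    unfold trapLoc
    rw [Nat.nth_zero]
    exact Nat.sInf_eq_zero.mpr (Or.inl h0)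
  have hmem : ∀ j, ω (trapLoc ω j) = true := fun j => Nat.nth_mem_of_infinite hinf j
  have hle : ∀ j, j ≤ trapLoc ω j := fun j => hmono.le_apply
  have hgapcast : ∀ i : ℕ, Gr ω (i + 1) = (trapLoc ω (i + 1) : ℝ) - (trapLoc ω i : ℝ) := by
    intro i
    unfold Gr gapLen
    have h1 : i + 1 - 1 = i := rfl
    rw [h1, Nat.cast_sub (le_of_lt (hmono (Nat.lt_succ_self i)))]
  have hgr_ge1 : ∀ i : ℕ, (1 : ℝ) ≤ Gr ω (i + 1) := by
    intro i
    rw [hgapcast i]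
    have h1 : trapLoc ω i + 1 ≤ trapLoc ω (i + 1) := hmono (Nat.lt_succ_self i)
    have h2 : (trapLoc ω i : ℝ) + 1 ≤ (trapLoc ω (i + 1) : ℝ) := by exact_mod_cast h1
    linarith
  have hgr_pos : ∀ i : ℕ, (0 : ℝ) < Gr ω (i + 1) := fun i => lt_of_lt_of_le one_pos (hgr_ge1 i)
  obtain ⟨K, hK⟩ : ∃ K : ℝ, K = 2 / (1 - c) := ⟨_, rfl⟩
  have h1c : 0 < 1 - c := by linarith
  have hg1pos : (0 : ℝ) < Gr ω 1 := hgr_pos 0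
  have hc_low' : (Gr ω 1)⁻¹ < c := hc_low
  have hc0 : 0 < c := lt_trans (inv_pos.mpr hg1pos) hc_low
  have hK2 : 2 < K := by
    rw [hK, lt_div_iff₀ h1c]
    nlinarith
  have hKpos : 0 < K := by linarith
  have hKc : K * (1 - c) = 2 := by
    rw [hK]
    field_simp
  have hGrec : ∀ j, 1 ≤ j → Gr ω (j + 1) = c * Gr ω j ^ 2 := fun j hj => hrec j hj
  have hcg : ∀ j, 1 ≤ j → 1 < c * Gr ω j := by
    intro j
    induction j with
    | zero => omega
    | succ k ih =>
        intro _
        by_cases hk : 1 ≤ k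
        · have h1 := ih hk
          rw [hGrec k hk]
          have hGk : (0 : ℝ) < Gr ω k := by
            rcases Nat.exists_eq_succ_of_ne_zero (by omega : k ≠ 0) with ⟨m, rfl⟩
            exact hgr_pos m
          nlinarith
        · have hk0 : k = 0 := by omega
          subst hk0
          have h2 : (Gr ω 1)⁻¹ * Gr ω 1 = 1 := inv_mul_cancel₀ (ne_of_gt hg1pos)
          have h4 : c * Gr ω (0 + 1) = c * Gr ω 1 := by norm_num
          rw [h4]
          nlinarith [mul_lt_mul_of_pos_right hc_low' hg1pos]
  have hGmono : ∀ j, 1 ≤ j → Gr ω j ≤ Gr ω (j + 1) := by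
    intro j hj
    rw [hGrec j hj]
    have h1 := hcg j hj
    have h2 : (0 : ℝ) ≤ Gr ω j := by
      unfold Gr
      positivity
    nlinarith
  have hAval : ∀ k : ℕ, Af ω c (k + 1) = K * Gr ω (k + 2) + 1 := by
    intro k
    rw [hK]
    unfold Af
    rw [max_eq_left (by omega : 1 ≤ k + 1)]
  have hA0 : Af ω c 0 = K * Gr ω 2 + 1 := by
    rw [hK]
    unfold Af
    norm_num
  have hA01 : Af ω c 1 = Af ω c 0 := by
    unfold Af
    norm_num
  have hAmono : ∀ j : ℕ, Af ω c j ≤ Af ω c (j + 1) := by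
    intro j
    rcases j with _ | k
    · rw [hA01]
    · rw [hAval k, hAval (k + 1)]
      have := hGmono (k + 2) (by omega)
      nlinarith
  have hA_ge1 : ∀ j : ℕ, 1 ≤ Af ω c j := by
    intro j
    unfold Af
    have h1 : (0 : ℝ) ≤ Gr ω (max j 1 + 1) := le_trans zero_le_one (hgr_ge1 _)
    have h2 : (0 : ℝ) < 2 / (1 - c) := by positivity
    nlinarith
  have hidx_le : ∀ x : ℕ, trapLoc ω (idx ω x) ≤ x := by
    intro x
    have h0' : trapLoc ω 0 ≤ x := by rw [hx0]; exact Nat.zero_le x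
    unfold idx
    exact Nat.findGreatest_spec (P := fun i => trapLoc ω i ≤ x) (Nat.zero_le x) h0'
  have hidx_lt : ∀ x : ℕ, x < trapLoc ω (idx ω x + 1) := by
    intro x
    by_contra hcon
    push_neg at hcon
    have h1 : idx ω x + 1 ≤ x := le_trans (hle _) hcon
    have h2 : idx ω x + 1 ≤ idx ω x := Nat.le_findGreatest h1 hcon
    omega
  have hidx_eq : ∀ (i x : ℕ), trapLoc ω i ≤ x → x < trapLoc ω (i + 1) → idx ω x = i := by
    intro i x hle1 hlt1
    have h1 : i ≤ idx ω x := Nat.le_findGreatest (le_trans (hle i) hle1) hle1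
    have h2 : idx ω x ≤ i := by
      by_contra hcon
      push_neg at hcon
      have h3 : trapLoc ω (i + 1) ≤ trapLoc ω (idx ω x) := hmono.monotone hcon
      have h4 := hidx_le x
      omega
    omega
  have hfform : ∀ (i x : ℕ), trapLoc ω i ≤ x → x ≤ trapLoc ω (i + 1) →
      fLya ω c x = Af ω c i
        + (Af ω c (i + 1) - Af ω c i) * ((x : ℝ) - (trapLoc ω i : ℝ)) / Gr ω (i + 1)
        + ((x : ℝ) - (trapLoc ω i : ℝ)) * ((trapLoc ω (i + 1) : ℝ) - (x : ℝ)) := by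
    intro i x h1 h2
    rcases lt_or_eq_of_le h2 with h3 | h3
    · have h4 := hidx_eq i x h1 h3
      unfold fLya
      rw [h4]
    · have h5 : idx ω x = i + 1 := by
        refine hidx_eq (i + 1) x (le_of_eq h3.symm) ?_
        rw [h3]
        exact hmono (Nat.lt_succ_self (i + 1))
      unfold fLya
      rw [h5]
      have hx : (x : ℝ) = (trapLoc ω (i + 1) : ℝ) := by exact_mod_cast h3
      rw [hx, hgapcast i]
      have hGne' : (trapLoc ω (i + 1) : ℝ) - (trapLoc ω i : ℝ) ≠ 0 := by
        rw [← hgapcast i]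
        exact ne_of_gt (hgr_pos i)
      simp only [sub_self, mul_zero, zero_mul, zero_div, add_zero]
      rw [mul_div_assoc, div_self hGne', mul_one]
      ring
  have hftrap : ∀ j : ℕ, fLya ω c (trapLoc ω j) = Af ω c j := by
    intro j
    rw [hfform j (trapLoc ω j) le_rfl (le_of_lt (hmono (Nat.lt_succ_self j)))]
    simp
  have hfpos : ∀ x : ℕ, 0 ≤ fLya ω c x := by
    intro x
    have h1 := hidx_le x
    have h2 := hidx_lt x
    have h1' : ((trapLoc ω (idx ω x) : ℕ) : ℝ) ≤ (x : ℝ) := by exact_mod_cast h1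
    have h2' : (x : ℝ) ≤ ((trapLoc ω (idx ω x + 1) : ℕ) : ℝ) := by exact_mod_cast le_of_lt h2
    unfold fLya
    have t1 : (0 : ℝ) ≤ Af ω c (idx ω x) := le_trans zero_le_one (hA_ge1 _)
    have t2 : (0 : ℝ) ≤ (Af ω c (idx ω x + 1) - Af ω c (idx ω x))
        * ((x : ℝ) - (trapLoc ω (idx ω x) : ℝ)) / Gr ω (idx ω x + 1) := by
      apply div_nonneg
      · exact mul_nonneg (sub_nonneg.mpr (hAmono _)) (by linarith)
      · exact le_of_lt (hgr_pos _)
    have t3 : (0 : ℝ) ≤ ((x : ℝ) - (trapLoc ω (idx ω x) : ℝ))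
        * ((trapLoc ω (idx ω x + 1) : ℝ) - (x : ℝ)) :=
      mul_nonneg (by linarith) (by linarith)
    linarith
  -- interior (non-trap) inequality
  have hI1 : ∀ x : ℕ, 1 ≤ x → ω x = false →
      fLya ω c (x - 1) + fLya ω c (x + 1) + 2 ≤ 2 * fLya ω c x := by
    intro x hx1 hxf
    set i := idx ω x with hi
    have h1 : trapLoc ω i ≤ x := hidx_le x
    have h2 : x < trapLoc ω (i + 1) := hidx_lt x
    have h3 : trapLoc ω i ≠ x := by
      intro h
      rw [← h, hmem i] at hxf
      exact absurd hxf (by simp)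
    have h4 : trapLoc ω i ≤ x - 1 := by omega
    have h5 : x - 1 ≤ trapLoc ω (i + 1) := by omega
    have h6 : trapLoc ω i ≤ x + 1 := by omega
    have h7 : x + 1 ≤ trapLoc ω (i + 1) := by omega
    have hc1 : ((x - 1 : ℕ) : ℝ) = (x : ℝ) - 1 := by
      rw [Nat.cast_sub hx1]
      norm_num
    have hc2 : ((x + 1 : ℕ) : ℝ) = (x : ℝ) + 1 := by push_cast; ring
    have hGne : Gr ω (i + 1) ≠ 0 := ne_of_gt (hgr_pos i)
    have heq : fLya ω c (x - 1) + fLya ω c (x + 1) = 2 * fLya ω c x - 2 := by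
      rw [hfform i (x - 1) h4 h5, hfform i (x + 1) h6 h7, hfform i x h1 (le_of_lt h2),
        hc1, hc2]
      field_simp
      ring
    linarith
  -- trap inequality
  have hI2 : ∀ x : ℕ, 1 ≤ x → ω x = true →
      fLya ω c (x - 1) + fLya ω c (x + 1) + 3 ≤ 3 * fLya ω c x := by
    intro x hx1 hxt
    obtain ⟨j, hj⟩ : ∃ j, trapLoc ω j = x := by
      refine ⟨Nat.count (fun y => ω y = true) x, ?_⟩
      unfold trapLoc
      exact Nat.nth_count hxt
    have hj1 : 1 ≤ j := by
      rcases Nat.eq_zero_or_pos j with hh | hh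
      · rw [hh, hx0] at hj; omega
      · exact hh
    obtain ⟨k, rfl⟩ : ∃ k, j = k + 1 := ⟨j - 1, by omega⟩
    subst hj
    have hL01 : trapLoc ω k < trapLoc ω (k + 1) := hmono (Nat.lt_succ_self k)
    have hL12 : trapLoc ω (k + 1) < trapLoc ω (k + 2) := hmono (Nat.lt_succ_self (k + 1))
    have hL12' : trapLoc ω (k + 1 + 1) = trapLoc ω (k + 2) := rfl
    have hcast1 : ((trapLoc ω (k + 1) - 1 : ℕ) : ℝ) = (trapLoc ω (k + 1) : ℝ) - 1 := by
      rw [Nat.cast_sub hx1]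
      norm_num
    have hcast2 : ((trapLoc ω (k + 1) + 1 : ℕ) : ℝ) = (trapLoc ω (k + 1) : ℝ) + 1 := by
      push_cast; ring
    have hG1pos : (0 : ℝ) < Gr ω (k + 1) := hgr_pos k
    have hG2pos : (0 : ℝ) < Gr ω (k + 2) := hgr_pos (k + 1)
    have e1 : fLya ω c (trapLoc ω (k + 1) - 1)
        = Af ω c k + (Af ω c (k + 1) - Af ω c k) * (Gr ω (k + 1) - 1) / Gr ω (k + 1)
          + (Gr ω (k + 1) - 1) := by
      rw [hfform k (trapLoc ω (k + 1) - 1) (by omega) (by omega), hcast1, hgapcast k]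
      ring
    have e2 : fLya ω c (trapLoc ω (k + 1) + 1)
        = Af ω c (k + 1) + (Af ω c (k + 2) - Af ω c (k + 1)) / Gr ω (k + 2)
          + (Gr ω (k + 2) - 1) := by
      rw [hfform (k + 1) (trapLoc ω (k + 1) + 1) (by omega) (by omega), hcast2,
        hgapcast (k + 1)]
      ring
    have e3 : fLya ω c (trapLoc ω (k + 1)) = Af ω c (k + 1) := hftrap (k + 1)
    have hq1 : (Af ω c (k + 1) - Af ω c k) * (Gr ω (k + 1) - 1) / Gr ω (k + 1)
        ≤ Af ω c (k + 1) - Af ω c k := by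
      rw [div_le_iff₀ hG1pos]
      have hba : 0 ≤ Af ω c (k + 1) - Af ω c k := sub_nonneg.mpr (hAmono k)
      have hle1 : Gr ω (k + 1) - 1 ≤ Gr ω (k + 1) := by linarith
      exact mul_le_mul_of_nonneg_left hle1 hba
    have hq2 : (Af ω c (k + 2) - Af ω c (k + 1)) / Gr ω (k + 2)
        ≤ K * c * Gr ω (k + 2) := by
      rw [div_le_iff₀ hG2pos]
      have h8 : Gr ω (k + 3) = c * Gr ω (k + 2) ^ 2 := hGrec (k + 2) (by omega)
      have hAv2 : Af ω c (k + 2) = K * Gr ω (k + 3) + 1 := hAval (k + 1)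
      have hdb : Af ω c (k + 2) - Af ω c (k + 1) ≤ K * (c * Gr ω (k + 2) ^ 2) := by
        rw [hAv2, hAval k, h8]
        have h10 : 0 ≤ K * Gr ω (k + 2) := mul_nonneg (le_of_lt hKpos) (le_of_lt hG2pos)
        linarith
      refine le_trans hdb (le_of_eq ?_)
      ring
    have hb : Af ω c (k + 1) = K * Gr ω (k + 2) + 1 := hAval k
    have hG12 : Gr ω (k + 1) ≤ Gr ω (k + 2) := hGmono (k + 1) (by omega)
    have hKG2 : K * Gr ω (k + 2) = 2 * Gr ω (k + 2) + K * c * Gr ω (k + 2) := by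
      linear_combination Gr ω (k + 2) * hKc
    rw [e1, e2, e3]
    linarith [hgr_ge1 k, hgr_ge1 (k + 1)]
  -- inequality at the origin
  have hI3 : 2 * fLya ω c 1 + 3 ≤ 3 * fLya ω c 0 := by
    have hf0 : fLya ω c 0 = Af ω c 0 := by
      have h1 := hftrap 0
      rw [hx0] at h1
      exact h1
    have h1le : (1 : ℕ) ≤ trapLoc ω 1 := by
      have := hmono (show (0:ℕ) < 1 by omega)
      omega
    have htl : (trapLoc ω 1 : ℝ) = Gr ω 1 := by
      have h1 := hgapcast 0
      rw [hx0] at h1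
      simpa using h1.symm
    have e1 : fLya ω c 1 = Af ω c 0 + (Gr ω 1 - 1) := by
      have h2 := hfform 0 1 (by rw [hx0]; omega) h1le
      rw [hx0] at h2
      rw [h2, hA01, htl]
      push_cast
      ring
    have hGr2 : Gr ω 2 = c * Gr ω 1 ^ 2 := hGrec 1 le_rfl
    have hcg1 : 1 < c * Gr ω 1 := hcg 1 le_rfl
    have hKcG : 2 < K * (c * Gr ω 1) := by nlinarith
    have hmain : 2 * Gr ω 1 < K * Gr ω 2 := by
      rw [hGr2]
      nlinarith [mul_lt_mul_of_pos_right hKcG hg1pos]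
    rw [e1, hf0, hA0]
    linarith [hgr_ge1 0]
  -- assemble the drift inequality
  refine ⟨fun x => ENNReal.ofReal (fLya ω c x), ENNReal.ofReal_ne_top, ?_⟩
  intro x
  rcases Nat.eq_zero_or_pos x with hx0' | hxpos
  · subst hx0'
    have htp1 : transProb ω (some 0) (some 1) = 2 / 3 := by simp [transProb]
    have htsum : ∑' z : ℕ, ENNReal.ofReal (transProb ω (some 0) (some z))
        * ENNReal.ofReal (fLya ω c z)
        = ENNReal.ofReal (2 / 3) * ENNReal.ofReal (fLya ω c 1) := by
      rw [tsum_eq_single 1 ?_]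
      · rw [htp1]
      · intro z hz
        have htp0 : transProb ω (some 0) (some z) = 0 := by simp [transProb, hz]
        rw [htp0]
        simp
    rw [htsum, ← ENNReal.ofReal_mul (by norm_num : (0:ℝ) ≤ 2/3), ← ENNReal.ofReal_one,
      ← ENNReal.ofReal_add (mul_nonneg (by norm_num) (hfpos 1)) zero_le_one]
    apply ENNReal.ofReal_le_ofReal
    linarith [hI3]
  · have hxne : x ≠ 0 := by omega
    have hzero : ∀ z : ℕ, z ∉ ({x - 1, x + 1} : Finset ℕ) →
        ENNReal.ofReal (transProb ω (some x) (some z)) * ENNReal.ofReal (fLya ω c z) = 0 := by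
      intro z hz
      simp only [Finset.mem_insert, Finset.mem_singleton] at hz
      push_neg at hz
      have htp0 : transProb ω (some x) (some z) = 0 := by
        simp only [transProb, if_neg hxne]
        rcases hω' : ω x with _ | _ <;> simp [hω', hz.1, hz.2]
      rw [htp0]
      simp
    have hpair : ({x - 1, x + 1} : Finset ℕ) = {x - 1, x + 1} := rfl
    have hne : x - 1 ≠ x + 1 := by omega
    rcases hωx : ω x with _ | _
    · -- non-trap site, w = 1/2
      have htp : ∀ z : ℕ, z = x - 1 ∨ z = x + 1 →
          transProb ω (some x) (some z) = 1 / 2 := by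
        intro z hz
        simp [transProb, hxne, hωx, hz]
      have htsum : ∑' z : ℕ, ENNReal.ofReal (transProb ω (some x) (some z))
          * ENNReal.ofReal (fLya ω c z)
          = ENNReal.ofReal (1 / 2) * ENNReal.ofReal (fLya ω c (x - 1))
            + ENNReal.ofReal (1 / 2) * ENNReal.ofReal (fLya ω c (x + 1)) := by
        rw [tsum_eq_sum hzero, Finset.sum_pair hne, htp (x - 1) (Or.inl rfl),
          htp (x + 1) (Or.inr rfl)]
      rw [htsum, ← ENNReal.ofReal_mul (by norm_num : (0:ℝ) ≤ 1/2),
        ← ENNReal.ofReal_mul (by norm_num : (0:ℝ) ≤ 1/2),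
        ← ENNReal.ofReal_add (mul_nonneg (by norm_num) (hfpos (x - 1)))
          (mul_nonneg (by norm_num) (hfpos (x + 1))), ← ENNReal.ofReal_one,
        ← ENNReal.ofReal_add (add_nonneg (mul_nonneg (by norm_num) (hfpos (x - 1)))
          (mul_nonneg (by norm_num) (hfpos (x + 1)))) zero_le_one]
      apply ENNReal.ofReal_le_ofReal
      have := hI1 x hxpos hωx
      linarith
    · -- trap site, w = 1/3
      have htp : ∀ z : ℕ, z = x - 1 ∨ z = x + 1 →
          transProb ω (some x) (some z) = 1 / 3 := by
        intro z hz
        simp [transProb, hxne, hωx, hz]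
      have htsum : ∑' z : ℕ, ENNReal.ofReal (transProb ω (some x) (some z))
          * ENNReal.ofReal (fLya ω c z)
          = ENNReal.ofReal (1 / 3) * ENNReal.ofReal (fLya ω c (x - 1))
            + ENNReal.ofReal (1 / 3) * ENNReal.ofReal (fLya ω c (x + 1)) := by
        rw [tsum_eq_sum hzero, Finset.sum_pair hne, htp (x - 1) (Or.inl rfl),
          htp (x + 1) (Or.inr rfl)]
      rw [htsum, ← ENNReal.ofReal_mul (by norm_num : (0:ℝ) ≤ 1/3),
        ← ENNReal.ofReal_mul (by norm_num : (0:ℝ) ≤ 1/3),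
        ← ENNReal.ofReal_add (mul_nonneg (by norm_num) (hfpos (x - 1)))
          (mul_nonneg (by norm_num) (hfpos (x + 1))), ← ENNReal.ofReal_one,
        ← ENNReal.ofReal_add (add_nonneg (mul_nonneg (by norm_num) (hfpos (x - 1)))
          (mul_nonneg (by norm_num) (hfpos (x + 1)))) zero_le_one]
      apply ENNReal.ofReal_le_ofReal
      have := hI2 x hxpos hωx
      linarith

end TrappedRWAux

end AuxTrappedRW

/-- if the quadratic recursion holds with `|I_1|⁻¹ < c < 1`, then the expected
survival time of the trapped random walk is finite. -/
theorem expSurvival_lt_top_of_c_lt_one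
    (ω : ℕ → Bool) (hω : IsTrapConfig ω) (c : ℝ) (hrec : QuadRec ω c)
    (hc_low : ((gapLen ω 1 : ℝ))⁻¹ < c) (hc_up : c < 1)
    {Ω : Type*} [MeasurableSpace Ω] (P : MeasureTheory.Measure Ω)
    (S : ℕ → Ω → Option ℕ) (hS : IsTrappedRW ω P S) :
    expSurvival P S < ⊤ := by
  obtain ⟨fh, hfh0, hdrift⟩ := TrappedRWAux.exists_lyapunov ω hω c hrec hc_low hc_up
  exact TrappedRWAux.aux_main ω P S hS fh hfh0 hdrift
end

section
/- Let the trap configuration satisfy the quadratic recursion with constant c, where c > 1 (and c > |I_1|^{-1}). Then the expected survival time of the trapped random walk is infinite: 𝔼(τ) = ∞. -/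
open MeasureTheory ENNReal Set

noncomputable section TrapAux
namespace TrapAux

open MeasureTheory ENNReal

/-! ### Deterministic kernel iterates -/

def r (ω : ℕ → Bool) (x y : ℕ) : ℝ≥0∞ := ENNReal.ofReal (transProb ω (some x) (some y))

def g (ω : ℕ → Bool) : ℕ → ℕ → ℝ≥0∞
  | 0, _ => 1
  | (n+1), x => r ω x (x-1) * g ω n (x-1) + r ω x (x+1) * g ω n (x+1)

def U (ω : ℕ → Bool) (x : ℕ) : ℝ≥0∞ := ∑' n, g ω n x

/-! ### Probability part -/

variable {Ω : Type*} [MeasurableSpace Ω]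

def cyl (S : ℕ → Ω → Option ℕ) (m : ℕ) (f : ℕ → ℕ) : Set Ω :=
  {a | ∀ i ≤ m, S i a = some (f i)}

def alive (S : ℕ → Ω → Option ℕ) (n : ℕ) : Set Ω := {a | ∀ i ≤ n, S i a ≠ none}

def ext (f : ℕ → ℕ) (m y : ℕ) : ℕ → ℕ := fun i => if i ≤ m then f i else y

lemma meas_cyl {S : ℕ → Ω → Option ℕ}
    (hM : ∀ (n : ℕ) (y : Option ℕ), MeasurableSet {a | S n a = y}) (m : ℕ) (f : ℕ → ℕ) :
    MeasurableSet (cyl S m f) := by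
  have : cyl S m f = ⋂ i ∈ Set.Iic m, {a | S i a = some (f i)} := by
    ext a; simp [cyl]
  rw [this]
  exact MeasurableSet.biInter (Set.Iic m).to_countable (fun i _ => hM i _)

lemma meas_alive {S : ℕ → Ω → Option ℕ}
    (hM : ∀ (n : ℕ) (y : Option ℕ), MeasurableSet {a | S n a = y}) (n : ℕ) :
    MeasurableSet (alive S n) := by
  have : alive S n = ⋂ i ∈ Set.Iic n, ({a | S i a = none})ᶜ := by
    ext a; simp [alive]
  rw [this]
  exact MeasurableSet.biInter (Set.Iic n).to_countable (fun i _ => (hM i none).compl)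

lemma markov_cyl (ω : ℕ → Bool) {P : Measure Ω} {S : ℕ → Ω → Option ℕ}
    (hS : IsTrappedRW ω P S) (m : ℕ) (f : ℕ → ℕ) (y : ℕ) :
    P (cyl S (m+1) (ext f m y)) = r ω (f m) y * P (cyl S m f) := by
  have h := hS.2.2.2 m (fun i => some (f i)) (some y)
  have hset : {a | (∀ i ≤ m, S i a = some (f i)) ∧ S (m + 1) a = some y}
      = cyl S (m+1) (ext f m y) := by
    ext a
    constructor
    · rintro ⟨h1, h2⟩ i hi
      rcases Nat.lt_or_ge i (m+1) with hlt | hge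
      · have him : i ≤ m := by omega
        simp [ext, him, h1 i him]
      · have : i = m + 1 := by omega
        subst this
        simp only [ext]
        rw [if_neg (by omega)]
        exact h2
    · intro h1
      refine ⟨fun i hi => ?_, ?_⟩
      · have := h1 i (by omega)
        simpa [ext, hi] using this
      · have := h1 (m+1) le_rfl
        simpa [ext, if_neg (show ¬ (m+1 ≤ m) by omega)] using this
  rw [hset] at h
  have hcyl : {a | ∀ i ≤ m, S i a = some (f i)} = cyl S m f := rfl
  rw [hcyl] at h
  exact h

lemma key_ineq (ω : ℕ → Bool) {P : Measure Ω} {S : ℕ → Ω → Option ℕ}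
    (hS : IsTrappedRW ω P S) :
    ∀ (n m : ℕ) (f : ℕ → ℕ),
      g ω n (f m) * P (cyl S m f) ≤ P (cyl S m f ∩ alive S (m + n)) := by
  have hM := hS.2.1
  intro n
  induction n with
  | zero =>
    intro m f
    have hsub : cyl S m f ∩ alive S (m + 0) = cyl S m f := by
      apply Set.inter_eq_self_of_subset_left
      intro a ha i hi
      rw [ha i hi]; simp
    rw [hsub]
    simp [g]
  | succ n ih =>
    intro m f
    set fp := ext f m (f m + 1) with hfp
    set fm := ext f m (f m - 1) with hfm
    have hfpv : fp (m+1) = f m + 1 := by simp [hfp, ext]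
    have hfmv : fm (m+1) = f m - 1 := by simp [hfm, ext]
    have hdisj : Disjoint (cyl S (m+1) fm ∩ alive S ((m+1) + n))
        (cyl S (m+1) fp ∩ alive S ((m+1) + n)) := by
      rw [Set.disjoint_left]
      rintro a ⟨h1, -⟩ ⟨h2, -⟩
      have e1 := h1 (m+1) le_rfl
      have e2 := h2 (m+1) le_rfl
      rw [e1] at e2
      have : fm (m+1) = fp (m+1) := by exact Option.some.inj e2
      rw [hfpv, hfmv] at this
      omega
    have hmeas2 : MeasurableSet (cyl S (m+1) fp ∩ alive S ((m+1) + n)) :=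
      (meas_cyl hM _ _).inter (meas_alive hM _)
    have hsub : (cyl S (m+1) fm ∩ alive S ((m+1) + n)) ∪
        (cyl S (m+1) fp ∩ alive S ((m+1) + n)) ⊆ cyl S m f ∩ alive S (m + (n+1)) := by
      have harr : (m+1) + n = m + (n+1) := by omega
      rintro a (⟨h1, h2⟩ | ⟨h1, h2⟩) <;>
        exact ⟨fun i hi => by simpa [hfm, hfp, ext, hi] using h1 i (by omega), harr ▸ h2⟩
    calc g ω (n+1) (f m) * P (cyl S m f)
        = g ω n (f m - 1) * (r ω (f m) (f m - 1) * P (cyl S m f))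
          + g ω n (f m + 1) * (r ω (f m) (f m + 1) * P (cyl S m f)) := by
          show (r ω (f m) (f m - 1) * g ω n (f m - 1)
            + r ω (f m) (f m + 1) * g ω n (f m + 1)) * P (cyl S m f) = _
          ring
      _ = g ω n (fm (m+1)) * P (cyl S (m+1) fm)
          + g ω n (fp (m+1)) * P (cyl S (m+1) fp) := by
          rw [markov_cyl ω hS m f (f m - 1), markov_cyl ω hS m f (f m + 1), hfpv, hfmv]
      _ ≤ P (cyl S (m+1) fm ∩ alive S ((m+1) + n))
          + P (cyl S (m+1) fp ∩ alive S ((m+1) + n)) :=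
          add_le_add (ih (m+1) fm) (ih (m+1) fp)
      _ = P ((cyl S (m+1) fm ∩ alive S ((m+1) + n)) ∪
            (cyl S (m+1) fp ∩ alive S ((m+1) + n))) :=
          (measure_union hdisj hmeas2).symm
      _ ≤ P (cyl S m f ∩ alive S (m + (n+1))) := measure_mono hsub

lemma alive_ge (ω : ℕ → Bool) {P : Measure Ω} {S : ℕ → Ω → Option ℕ}
    (hS : IsTrappedRW ω P S) (n : ℕ) :
    g ω n 0 ≤ P (alive S n) := by
  have h0 : P (cyl S 0 (fun _ => 0)) = 1 := by
    have : cyl S 0 (fun _ => (0:ℕ)) = {a | S 0 a = some 0} := by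
      ext a
      simp [cyl]
    rw [this]
    exact hS.2.2.1
  have h := key_ineq ω hS n 0 (fun _ => 0)
  rw [h0, mul_one] at h
  calc g ω n 0 ≤ P (cyl S 0 (fun _ => 0) ∩ alive S (0 + n)) := h
    _ ≤ P (alive S n) := by
        apply measure_mono
        intro a ha
        simpa using ha.2

lemma tsum_indicator_le_surv {S : ℕ → Ω → Option ℕ} (a : Ω) :
    ∑' n, (alive S n).indicator (fun _ => (1:ℝ≥0∞)) a
      ≤ ((survivalTime S a : ℕ∞) : ℝ≥0∞) := by
  by_cases hex : ∃ k, S k a = none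
  · set m := Nat.find hex with hm
    have hτ : survivalTime S a = (m : ℕ∞) := by
      apply le_antisymm
      · exact sInf_le ⟨m, rfl, Nat.find_spec hex⟩
      · apply le_sInf
        rintro t ⟨k, rfl, hk⟩
        exact_mod_cast Nat.cast_le.2 (Nat.find_min' hex hk)
    have hind : ∀ n, (alive S n).indicator (fun _ => (1:ℝ≥0∞)) a
        = if n < m then 1 else 0 := by
      intro n
      by_cases h : n < m
      · rw [if_pos h, Set.indicator_of_mem]
        intro i hi
        exact Nat.find_min hex (by omega)
      · rw [if_neg h, Set.indicator_of_notMem]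
        intro hcon
        exact hcon m (by omega) (Nat.find_spec hex)
    rw [tsum_congr hind, hτ]
    have : ∑' n, (if n < m then (1:ℝ≥0∞) else 0) = ∑ n ∈ Finset.range m, (if n < m then (1:ℝ≥0∞) else 0) := by
      apply tsum_eq_sum
      intro b hb
      rw [if_neg]
      simpa using hb
    rw [this]
    have : ∑ n ∈ Finset.range m, (if n < m then (1:ℝ≥0∞) else 0) = m := by
      rw [Finset.sum_congr rfl (fun x hx => if_pos (Finset.mem_range.1 hx))]
      simp
    rw [this]
    exact le_of_eq (by exact_mod_cast rfl)
  · have hτ : survivalTime S a = ⊤ := by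
      have : {t : ℕ∞ | ∃ k : ℕ, (k : ℕ∞) = t ∧ S k a = none} = ∅ := by
        ext t
        simp only [Set.mem_setOf_eq, Set.mem_empty_iff_false, iff_false]
        rintro ⟨k, -, hk⟩
        exact hex ⟨k, hk⟩
      rw [survivalTime, this, sInf_empty]
    rw [hτ]
    simp

lemma exp_ge (ω : ℕ → Bool) {P : Measure Ω} {S : ℕ → Ω → Option ℕ}
    (hS : IsTrappedRW ω P S) : U ω 0 ≤ expSurvival P S := by
  have hM := hS.2.1
  have h1 : U ω 0 ≤ ∑' n, P (alive S n) :=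
    ENNReal.tsum_le_tsum (fun n => alive_ge ω hS n)
  have h2 : ∑' n, P (alive S n)
      = ∫⁻ a, ∑' n, (alive S n).indicator (fun _ => (1:ℝ≥0∞)) a ∂P := by
    have := lintegral_tsum (μ := P)
      (f := fun n => (alive S n).indicator (fun _ => (1:ℝ≥0∞)))
      (fun n => ((measurable_one.indicator (meas_alive hM n))).aemeasurable)
    rw [this]
    exact tsum_congr (fun n => (lintegral_indicator_one (meas_alive hM n)).symm)
  have h3 : ∫⁻ a, ∑' n, (alive S n).indicator (fun _ => (1:ℝ≥0∞)) a ∂P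
      ≤ expSurvival P S :=
    lintegral_mono (fun a => tsum_indicator_le_surv a)
  exact h1.trans (h2.le.trans h3)

/-! ### Fixed-point equation and finiteness -/

lemma U_fix (ω : ℕ → Bool) (x : ℕ) :
    U ω x = 1 + (r ω x (x-1) * U ω (x-1) + r ω x (x+1) * U ω (x+1)) := by
  have h1 : U ω x = g ω 0 x + ∑' n, g ω (n+1) x := tsum_eq_zero_add' ENNReal.summable
  have h2 : ∑' n, g ω (n+1) x
      = r ω x (x-1) * U ω (x-1) + r ω x (x+1) * U ω (x+1) := by
    have hg : ∀ n, g ω (n+1) x = r ω x (x-1) * g ω n (x-1) + r ω x (x+1) * g ω n (x+1) :=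
      fun n => by simp [g]
    rw [tsum_congr hg, ENNReal.tsum_add, ENNReal.tsum_mul_left, ENNReal.tsum_mul_left]
    rfl
  rw [h1, h2]
  rfl

lemma r00 (ω : ℕ → Bool) : r ω 0 0 = 0 := by simp [r, transProb]

lemma r01 (ω : ℕ → Bool) : r ω 0 1 = ENNReal.ofReal (2/3) := by simp [r, transProb]

lemma r_left (ω : ℕ → Bool) (x : ℕ) :
    r ω (x+1) x = ENNReal.ofReal (if ω (x+1) = true then (1/3:ℝ) else 1/2) := by
  by_cases hb : ω (x+1) = true <;> simp [r, transProb, hb]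

lemma r_right (ω : ℕ → Bool) (x : ℕ) :
    r ω (x+1) (x+2) = ENNReal.ofReal (if ω (x+1) = true then (1/3:ℝ) else 1/2) := by
  by_cases hb : ω (x+1) = true <;> simp [r, transProb, hb]

lemma coeff_pos (ω : ℕ → Bool) (x : ℕ) :
    ENNReal.ofReal (if ω (x+1) = true then (1/3:ℝ) else 1/2) ≠ 0 := by
  by_cases hb : ω (x+1) = true <;>
    simp only [hb, if_true, if_false, ne_eq, ENNReal.ofReal_eq_zero, not_le] <;> norm_num

lemma U_fin (ω : ℕ → Bool) (h0 : U ω 0 ≠ ⊤) : ∀ x, U ω x ≠ ⊤ := by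
  have h1 : U ω 1 ≠ ⊤ := by
    intro h1
    apply h0
    have := U_fix ω 0
    rw [show (0:ℕ) - 1 = 0 from rfl, r00, r01, h1] at this
    rw [this]
    rw [ENNReal.mul_top (ne_of_gt (ENNReal.ofReal_pos.2 (by norm_num)))]
    simp
  have hstep : ∀ x, U ω (x+1) ≠ ⊤ → U ω (x+2) ≠ ⊤ := by
    intro x hx h2
    apply hx
    have := U_fix ω (x+1)
    rw [show (x+1) - 1 = x from rfl, r_left, r_right, h2] at this
    rw [this, ENNReal.mul_top (coeff_pos ω x)]
    simp
  intro x
  match x with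
  | 0 => exact h0
  | 1 => exact h1
  | (n+2) => 
    have : ∀ k, U ω (k+1) ≠ ⊤ := by
      intro k
      induction k with
      | zero => exact h1
      | succ k ih => exact hstep k ih
    exact this (n+1)

lemma v_equation (ω : ℕ → Bool) (h0 : U ω 0 ≠ ⊤) (x : ℕ) :
    (U ω (x+1)).toReal = 1 + (if ω (x+1) = true then (1/3:ℝ) else 1/2)
      * ((U ω x).toReal + (U ω (x+2)).toReal) := by
  have hfin := U_fin ω h0
  set t := (if ω (x+1) = true then (1/3:ℝ) else 1/2) with ht
  have ht0 : 0 ≤ t := by rw [ht]; split <;> norm_num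
  have h := U_fix ω (x+1)
  rw [show (x+1) - 1 = x from rfl, r_left, r_right, ← ht] at h
  have hm1 : ENNReal.ofReal t * U ω x ≠ ⊤ :=
    ENNReal.mul_ne_top ENNReal.ofReal_ne_top (hfin x)
  have hm2 : ENNReal.ofReal t * U ω (x+2) ≠ ⊤ :=
    ENNReal.mul_ne_top ENNReal.ofReal_ne_top (hfin (x+2))
  rw [h, ENNReal.toReal_add (by simp) (ENNReal.add_ne_top.2 ⟨hm1, hm2⟩),
    ENNReal.toReal_add hm1 hm2, ENNReal.toReal_mul, ENNReal.toReal_mul,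
    ENNReal.toReal_ofReal ht0]
  simp [mul_add]

/-! ### The landscape part: no nonnegative solution -/

lemma descent_core (c P1 P2 a0 a1 a2 s0 s1 : ℝ)
    (hc : 1 < c) (hP1 : 1 ≤ P1) (hP2 : P2 = c * P1^2)
    (hR1 : a1 = a0 + P1 * s0 - P1 * (P1 - 1))
    (hR1' : a2 = a1 + P2 * s1 - P2 * (P2 - 1))
    (hR2 : s1 = s0 - 2*(P1 - 1) + a1 - 3)
    (ha0 : 0 ≤ a0) (ha1 : 0 ≤ a1)
    (hsmall : P1 + P2 ≤ (c - 1) * (P1 * P2)) :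
    a2 ≤ c * P2 * a1 - P2^2 := by
  have hP1' : (0:ℝ) < P1 := by linarith
  have hP2' : 1 ≤ P2 := by nlinarith
  have hEQ : P1 * a2 = a1*(P1 + P2 + P1*P2) - P2*a0 - P1*P2*(P1 + P2 + 1) := by
    linear_combination P1 * hR1' + (P1 * P2) * hR2 - P2 * hR1
  have key : P1 * a2 ≤ P1 * (c * P2 * a1 - P2^2) := by
    have h1 : a1*(P1 + P2 + P1*P2) ≤ a1 * (c * (P1 * P2)) := by
      apply mul_le_mul_of_nonneg_left _ ha1
      nlinarith
    have h2 : 0 ≤ P2 * a0 := mul_nonneg (by linarith) ha0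
    have h3 : P1 * P2 * P2 ≤ P1*P2*(P1 + P2 + 1) := by nlinarith
    nlinarith
  exact le_of_mul_le_mul_left key hP1'

lemma descent_div (c P2 P3 a1 a2 : ℝ) (hc : 1 < c) (hP2 : 1 ≤ P2) (hP3 : P3 = c * P2^2)
    (h : a2 ≤ c * P2 * a1 - P2^2) : a2 / P3 ≤ a1 / P2 - 1/c := by
  have hc0 : (0:ℝ) < c := by linarith
  have hP20 : (0:ℝ) < P2 := by linarith
  have hP30 : (0:ℝ) < P3 := by rw [hP3]; positivity
  rw [div_le_iff₀ hP30]
  have hrw : (a1 / P2 - 1/c) * P3 = c * P2 * a1 - P2^2 := by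
    rw [hP3]; field_simp
  rw [hrw]; exact h

theorem no_solution (ω : ℕ → Bool) (hω : IsTrapConfig ω) (c : ℝ) (hrec : QuadRec ω c)
    (hc : 1 < c) (v : ℕ → ℝ) (hv : ∀ x, 0 ≤ v x)
    (heq : ∀ x, v (x+1) = 1 + (if ω (x+1) = true then (1/3:ℝ) else 1/2) * (v x + v (x+2))) :
    False := by
  have hc0 : (0:ℝ) < c := by linarith
  set X : ℕ → ℕ := trapLoc ω with hX
  have hinf : {x : ℕ | ω x = true}.Infinite := hω.2
  have htrap : ∀ i, ω (X i) = true := fun i => Nat.nth_mem_of_infinite hinf i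
  have hmono : StrictMono X := Nat.nth_strictMono hinf
  have hX0 : X 0 = 0 := by
    rw [hX]
    show Nat.nth (fun x => ω x = true) 0 = 0
    rw [Nat.nth_zero]
    exact Nat.sInf_eq_zero.2 (Or.inl hω.1)
  have hnotrap : ∀ i y, X i < y → y < X (i+1) → ω y = false := by
    intro i y h1 h2
    by_cases hy : ω y = true
    · exfalso
      have : y ∈ Set.range (Nat.nth (fun x => ω x = true)) := by
        rw [Nat.range_nth_of_infinite hinf]; exact hy
      obtain ⟨j, hj⟩ := this
      have hj' : X j = y := hj
      have hij : i < j := hmono.lt_iff_lt.1 (by rw [hj']; exact h1)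
      have hji : j < i + 1 := hmono.lt_iff_lt.1 (by rw [hj']; exact h2)
      omega
    · cases hh : ω y
      · rfl
      · exact absurd hh hy
  set L : ℕ → ℕ := gapLen ω with hL
  have hgapdef : ∀ i, L (i+1) = X (i+1) - X i := by
    intro i
    rw [hL, hX]
    show gapLen ω (i+1) = trapLoc ω (i+1) - trapLoc ω i
    simp [gapLen]
  have hXlt : ∀ i, X i < X (i+1) := fun i => hmono (Nat.lt_succ_self i)
  have hXadd : ∀ i, X (i+1) = X i + L (i+1) := by
    intro i
    have h1 := hgapdef i
    have h2 := hXlt i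
    omega
  have hLpos : ∀ i, 0 < L (i+1) := by
    intro i
    have h1 := hgapdef i
    have h2 := hXlt i
    omega
  set Lr : ℕ → ℝ := fun i => (L i : ℝ) with hLrdef
  have hLr1 : ∀ i, 1 ≤ Lr (i+1) := by
    intro i
    have := hLpos i
    simp only [hLrdef]
    exact_mod_cast this
  have hrecL : ∀ i, Lr (i+2) = c * Lr (i+1)^2 := by
    intro i
    have := hrec (i+1) (by omega)
    simpa [hLrdef, hL] using this
  set A : ℕ → ℝ := fun i => v (X i) with hA
  set Sl : ℕ → ℝ := fun i => v (X i + 1) - v (X i) with hSl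
  have hAnn : ∀ i, 0 ≤ A i := fun i => hv (X i)
  -- values across a gap
  have hgap : ∀ i t, t + 1 ≤ L (i+1) →
      v (X i + t) = A i + (t:ℝ) * Sl i - (t:ℝ) * ((t:ℝ)-1) ∧
      v (X i + t + 1) = A i + ((t:ℝ)+1) * Sl i - ((t:ℝ)+1) * (t:ℝ) := by
    intro i t
    induction t with
    | zero =>
      intro _
      constructor
      · simp only [Nat.add_zero, Nat.cast_zero, hA]
        ring
      · simp only [Nat.add_zero, Nat.cast_zero, hA, hSl]
        ring
    | succ t ih =>
      intro hle
      obtain ⟨ih1, ih2⟩ := ih (by omega)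
      have hsite : ω (X i + t + 1) = false := by
        apply hnotrap i
        · omega
        · have := hXadd i; omega
      have he := heq (X i + t)
      rw [hsite] at he
      rw [if_neg (by simp)] at he
      have hstep : v (X i + t + 2) = 2 * v (X i + t + 1) - v (X i + t) - 2 := by
        linarith [he]
      constructor
      · rw [show X i + (t+1) = X i + t + 1 from by omega]
        push_cast
        linear_combination ih2
      · rw [show X i + (t+1) + 1 = X i + t + 2 from by omega]
        rw [hstep]
        push_cast
        linear_combination 2 * ih2 - ih1
  -- R1 and the value one before the next trap
  have hR1 : ∀ i, A (i+1) = A i + Lr (i+1) * Sl i - Lr (i+1) * (Lr (i+1) - 1) ∧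
      v (X (i+1) - 1) = A i + (Lr (i+1) - 1) * Sl i - (Lr (i+1) - 1) * (Lr (i+1) - 2) := by
    intro i
    have hLp := hLpos i
    obtain ⟨h1, h2⟩ := hgap i (L (i+1) - 1) (by omega)
    have hcast : ((L (i+1) - 1 : ℕ) : ℝ) = Lr (i+1) - 1 := by
      simp only [hLrdef]
      push_cast [Nat.cast_sub hLp]
      ring
    constructor
    · have hidx : X i + (L (i+1) - 1) + 1 = X (i+1) := by
        have := hXadd i; omega
      rw [hidx] at h2
      rw [show A (i+1) = v (X (i+1)) from rfl, h2, hcast]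
      ring
    · have hidx : X (i+1) - 1 = X i + (L (i+1) - 1) := by
        have := hXadd i; omega
      rw [hidx, h1, hcast]
      ring
  -- R2
  have hR2 : ∀ i, Sl (i+1) = Sl i - 2*(Lr (i+1) - 1) + A (i+1) - 3 := by
    intro i
    have hXpos : 0 < X (i+1) := by
      have h := hXlt i
      omega
    obtain ⟨z, hz⟩ : ∃ z, X (i+1) = z + 1 := ⟨X (i+1) - 1, by omega⟩
    have hb : ω (z+1) = true := by rw [← hz]; exact htrap (i+1)
    have he := heq z
    rw [hb, if_pos rfl] at he
    have hz1 : v (z+1) = A (i+1) := by rw [← hz]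
    have hz2 : v (z+2) = A (i+1) + Sl (i+1) := by
      rw [show z + 2 = X (i+1) + 1 from by omega]
      simp only [hA, hSl]
      ring
    have hz0 : v z = A i + (Lr (i+1) - 1) * Sl i - (Lr (i+1) - 1) * (Lr (i+1) - 2) := by
      rw [show z = X (i+1) - 1 from by omega]
      exact (hR1 i).2
    rw [hz1, hz2, hz0] at he
    have h1 := (hR1 i).1
    linear_combination (-3 : ℝ) * he + h1
  -- growth of gaps
  have hgrow : ∀ k, c^k ≤ Lr (k+1) := by
    intro k
    induction k with
    | zero => simpa using hLr1 0
    | succ k ih =>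
      have h1 := hLr1 k
      have h2 := hrecL k
      rw [h2, pow_succ]
      have h4 : Lr (k+1) ≤ Lr (k+1)^2 := by nlinarith
      have h5 : c^k ≤ Lr (k+1)^2 := le_trans ih h4
      calc c^k * c ≤ Lr (k+1)^2 * c := mul_le_mul_of_nonneg_right h5 (le_of_lt hc0)
        _ = c * Lr (k+1)^2 := by ring
  -- choose the threshold
  obtain ⟨K, hK⟩ := pow_unbounded_of_one_lt (2/(c-1)) hc
  have hsmall : ∀ i, K ≤ i → Lr (i+1) + Lr (i+2) ≤ (c-1) * (Lr (i+1) * Lr (i+2)) := by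
    intro i hi
    have h1 : c^K ≤ c^i := pow_le_pow_right₀ (le_of_lt hc) hi
    have h2 : 2/(c-1) < Lr (i+1) := lt_of_lt_of_le hK (le_trans h1 (hgrow i))
    have hcm : (0:ℝ) < c - 1 := by linarith
    have h3 : 2 < (c-1) * Lr (i+1) := by
      rw [div_lt_iff₀ hcm] at h2
      linarith [h2]
    have h4 : Lr (i+1) ≤ Lr (i+2) := by
      have := hrecL i
      have := hLr1 i
      nlinarith
    have h5 : 1 ≤ Lr (i+2) := hLr1 (i+1)
    nlinarith
  -- the descending ratios
  set ρ : ℕ → ℝ := fun i => A (i+1) / Lr (i+2) with hρ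
  have hρnn : ∀ i, 0 ≤ ρ i := by
    intro i
    apply div_nonneg (hAnn (i+1))
    linarith [hLr1 (i+1)]
  have hstep : ∀ i, K ≤ i → ρ (i+1) ≤ ρ i - 1/c := by
    intro i hi
    have hcore := descent_core c (Lr (i+1)) (Lr (i+2)) (A i) (A (i+1)) (A (i+2))
      (Sl i) (Sl (i+1)) hc (hLr1 i) (hrecL i) (hR1 i).1 (hR1 (i+1)).1 (hR2 i)
      (hAnn i) (hAnn (i+1)) (hsmall i hi)
    exact descent_div c (Lr (i+2)) (Lr (i+3)) (A (i+1)) (A (i+2)) hc (hLr1 (i+1))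
      (hrecL (i+1)) hcore
  have hiter : ∀ k, ρ (K + k) ≤ ρ K - k * (1/c) := by
    intro k
    induction k with
    | zero => simp
    | succ k ih =>
      have h1 := hstep (K + k) (by omega)
      rw [show K + (k+1) = (K + k) + 1 from by omega]
      push_cast
      linarith
  obtain ⟨k, hk⟩ := exists_nat_gt (ρ K * c)
  have h1 := hiter k
  have h2 := hρnn (K + k)
  have h3 : ρ K < k * (1/c) := by
    rw [mul_one_div, lt_div_iff₀ hc0]
    linarith
  linarith

end TrapAux
end TrapAux

/-- if the quadratic recursion holds with `c > 1` (and `c > |I_1|⁻¹`), then the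
expected survival time of the trapped random walk is infinite. -/
theorem expSurvival_eq_top_of_one_lt_c
    (ω : ℕ → Bool) (hω : IsTrapConfig ω) (c : ℝ) (hrec : QuadRec ω c)
    (hc_low : ((gapLen ω 1 : ℝ))⁻¹ < c) (hc : 1 < c)
    {Ω : Type*} [MeasurableSpace Ω] (P : MeasureTheory.Measure Ω)
    (S : ℕ → Ω → Option ℕ) (hS : IsTrappedRW ω P S) :
    expSurvival P S = ⊤ := by
  by_contra hne
  have hle := TrapAux.exp_ge ω hS
  have hU0 : TrapAux.U ω 0 ≠ ⊤ := by
    intro h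
    rw [h] at hle
    exact hne (top_le_iff.1 hle)
  exact TrapAux.no_solution ω hω c hrec hc (fun x => (TrapAux.U ω x).toReal)
    (fun x => ENNReal.toReal_nonneg) (fun x => TrapAux.v_equation ω hU0 x)
end

section
/- Assume |I_1| ≥ 3 and let the trap configuration satisfy the quadratic recursion with constant c, where |I_1|^{-1} < c < (|I_1| + √(|I_1|² − 8))/(2|I_1|). Then 𝔼(τ) < ∞. -/
open MeasureTheory ENNReal Set

noncomputable section TRWAux

namespace TRW

variable (ω : ℕ → Bool) (c : ℝ)

def alp : ℝ := (1 - c)⁻¹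

def v0 : ℝ := 2 * alp c * (gapLen ω 1 : ℝ) + 2 * (gapLen ω 1 : ℝ) + 2

def vv (j : ℕ) : ℝ := v0 ω c + (alp c - 1) * ∑ m ∈ Finset.Icc 1 j, ((gapLen ω m : ℝ)) ^ 2

def Jx (x : ℕ) : ℕ := Nat.count (fun y => ω y = true) (x + 1) - 1

def fL (x : ℕ) : ℝ :=
  vv ω c (Jx ω x) + alp c * (gapLen ω (Jx ω x + 1) : ℝ) * ((x - trapLoc ω (Jx ω x) : ℕ) : ℝ)
    - ((x - trapLoc ω (Jx ω x) : ℕ) : ℝ) ^ 2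

variable {ω} {c}

section NatFacts

variable (hω : IsTrapConfig ω)
include hω

lemma hinf : {x | ω x = true}.Infinite := hω.2

lemma trapLoc_zero : trapLoc ω 0 = 0 := by
  have : Nat.nth (fun x => ω x = true) 0 = 0 :=
    Nat.nth_zero_of_zero hω.1
  simpa [trapLoc] using this

lemma trapLoc_lt_succ (j : ℕ) : trapLoc ω j < trapLoc ω (j + 1) :=
  (Nat.nth_lt_nth hω.2).mpr (Nat.lt_succ_self j)

lemma trapLoc_add_gap (j : ℕ) : trapLoc ω (j + 1) = trapLoc ω j + gapLen ω (j + 1) := by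
  have h := trapLoc_lt_succ hω j
  simp only [gapLen, Nat.add_sub_cancel]
  omega

lemma one_le_gap (j : ℕ) : 1 ≤ gapLen ω (j + 1) := by
  have h := trapLoc_lt_succ hω j
  have h2 := trapLoc_add_gap hω j
  omega

lemma trap_trapLoc (j : ℕ) : ω (trapLoc ω j) = true :=
  Nat.nth_mem_of_infinite hω.2 j

lemma count_pos (x : ℕ) : 1 ≤ Nat.count (fun y => ω y = true) (x + 1) := by
  have h1 : Nat.count (fun y => ω y = true) 1 = 1 := by
    simp [Nat.count_succ, hω.1]
  calc 1 = Nat.count (fun y => ω y = true) 1 := h1.symm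
    _ ≤ _ := Nat.count_monotone _ (by omega)

lemma Jx_succ_count (x : ℕ) : Jx ω x + 1 = Nat.count (fun y => ω y = true) (x + 1) := by
  have := count_pos hω x
  simp only [Jx]
  omega

lemma trapLoc_Jx_le (x : ℕ) : trapLoc ω (Jx ω x) ≤ x := by
  have h : Jx ω x < Nat.count (fun y => ω y = true) (x + 1) := by
    rw [← Jx_succ_count hω x]; omega
  have h2 := (Nat.lt_nth_iff_count_lt hω.2).mp h
  simpa [trapLoc] using Nat.lt_succ_iff.mp h2

lemma lt_trapLoc_Jx_succ (x : ℕ) : x < trapLoc ω (Jx ω x + 1) := by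
  have h : Nat.count (fun y => ω y = true) (x + 1) ≤ Jx ω x + 1 := by
    rw [← Jx_succ_count hω x]
  have := (Nat.count_le_iff_le_nth hω.2).mp h
  simpa [trapLoc] using this

lemma Jx_eq_of_mem {j x : ℕ} (h1 : trapLoc ω j ≤ x) (h2 : x < trapLoc ω (j + 1)) :
    Jx ω x = j := by
  have hc1 : j < Nat.count (fun y => ω y = true) (x + 1) :=
    (Nat.lt_nth_iff_count_lt hω.2).mpr (by simpa [trapLoc] using Nat.lt_succ_of_le h1)
  have hc2 : Nat.count (fun y => ω y = true) (x + 1) ≤ j + 1 :=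
    (Nat.count_le_iff_le_nth hω.2).mpr (by simpa [trapLoc] using h2)
  have := Jx_succ_count hω x
  omega

lemma Jx_trapLoc (j : ℕ) : Jx ω (trapLoc ω j) = j :=
  Jx_eq_of_mem hω le_rfl (trapLoc_lt_succ hω j)

lemma trapLoc_Jx_eq_of_trap {x : ℕ} (h : ω x = true) : trapLoc ω (Jx ω x) = x := by
  have h1 : Nat.count (fun y => ω y = true) (x + 1)
      = Nat.count (fun y => ω y = true) x + 1 := by
    simp [Nat.count_succ, h]
  have h2 : Jx ω x = Nat.count (fun y => ω y = true) x := by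
    have := Jx_succ_count hω x; omega
  rw [h2]
  exact Nat.nth_count h

lemma trapLoc_Jx_lt_of_nontrap {x : ℕ} (h : ω x ≠ true) : trapLoc ω (Jx ω x) < x := by
  rcases lt_or_eq_of_le (trapLoc_Jx_le hω x) with h' | h'
  · exact h'
  · exact absurd (h' ▸ trap_trapLoc hω (Jx ω x)) h

end NatFacts

section Formula

variable (hω : IsTrapConfig ω)
include hω

lemma vv_succ (j : ℕ) :
    vv ω c (j + 1) = vv ω c j + (alp c - 1) * (gapLen ω (j + 1) : ℝ) ^ 2 := by
  simp only [vv]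
  rw [Finset.sum_Icc_succ_top (by omega)]
  ring

lemma fL_formula {j t : ℕ} (ht : t ≤ gapLen ω (j + 1)) :
    fL ω c (trapLoc ω j + t)
      = vv ω c j + alp c * (gapLen ω (j + 1) : ℝ) * (t : ℝ) - (t : ℝ) ^ 2 := by
  rcases lt_or_eq_of_le ht with h | h
  · have hJ : Jx ω (trapLoc ω j + t) = j := by
      refine Jx_eq_of_mem hω (by omega) ?_
      rw [trapLoc_add_gap hω j]; omega
    have hd : trapLoc ω j + t - trapLoc ω (Jx ω (trapLoc ω j + t)) = t := by
      rw [hJ]; omega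
    simp only [fL, hJ]
    rw [show trapLoc ω j + t - trapLoc ω j = t from by omega]
  · have hx : trapLoc ω j + t = trapLoc ω (j + 1) := by
      rw [trapLoc_add_gap hω j, h]
    rw [hx]
    have hJ : Jx ω (trapLoc ω (j + 1)) = j + 1 := Jx_trapLoc hω (j + 1)
    simp only [fL, hJ, Nat.sub_self, Nat.cast_zero]
    rw [vv_succ hω, ← h]
    ring

end Formula

section Drift

variable (hω : IsTrapConfig ω) (hα : 1 ≤ alp c)
include hω hα

lemma v0_ge_two : (2 : ℝ) ≤ v0 ω c := by
  have h1 : (0 : ℝ) ≤ (gapLen ω 1 : ℝ) := Nat.cast_nonneg _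
  have := hα
  simp only [v0]
  nlinarith

lemma vv_ge_v0 (j : ℕ) : v0 ω c ≤ vv ω c j := by
  simp only [vv]
  have h : (0 : ℝ) ≤ ∑ m ∈ Finset.Icc 1 j, ((gapLen ω m : ℝ)) ^ 2 :=
    Finset.sum_nonneg fun m _ => sq_nonneg _
  nlinarith

lemma fL_nonneg (x : ℕ) : 0 ≤ fL ω c x := by
  have h1 : trapLoc ω (Jx ω x) ≤ x := trapLoc_Jx_le hω x
  have h2 : x < trapLoc ω (Jx ω x + 1) := lt_trapLoc_Jx_succ hω x
  have h3 : x - trapLoc ω (Jx ω x) < gapLen ω (Jx ω x + 1) := by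
    have := trapLoc_add_gap hω (Jx ω x); omega
  have h4 : ((x - trapLoc ω (Jx ω x) : ℕ) : ℝ) ≤ (gapLen ω (Jx ω x + 1) : ℝ) := by
    exact_mod_cast le_of_lt h3
  have h5 : (0 : ℝ) ≤ ((x - trapLoc ω (Jx ω x) : ℕ) : ℝ) := Nat.cast_nonneg _
  have h6 := vv_ge_v0 hω hα (j := Jx ω x)
  have h7 := v0_ge_two hω hα
  have h8 : (0:ℝ) ≤ (gapLen ω (Jx ω x + 1) : ℝ) := Nat.cast_nonneg _
  have k1 : 0 ≤ (alp c - 1) * ((gapLen ω (Jx ω x + 1) : ℝ) * ((x - trapLoc ω (Jx ω x) : ℕ) : ℝ)) :=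
    mul_nonneg (by linarith) (mul_nonneg h8 h5)
  have k2 : 0 ≤ ((x - trapLoc ω (Jx ω x) : ℕ) : ℝ)
      * ((gapLen ω (Jx ω x + 1) : ℝ) - ((x - trapLoc ω (Jx ω x) : ℕ) : ℝ)) :=
    mul_nonneg h5 (by linarith)
  simp only [fL]
  nlinarith [k1, k2]

variable (halc : alp c - 1 = c * alp c) (hc0 : 0 < c) (hrec : QuadRec ω c)
include halc hc0 hrec

lemma condA {j : ℕ} (hj : 1 ≤ j) :
    alp c * (gapLen ω (j + 1) : ℝ) + (2 - alp c) * (gapLen ω j : ℝ) + 1 ≤ vv ω c j := by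
  obtain ⟨k, rfl⟩ : ∃ k, j = k + 1 := ⟨j - 1, by omega⟩
  have hrecj : (gapLen ω (k + 1 + 1) : ℝ) = c * (gapLen ω (k + 1) : ℝ) ^ 2 :=
    hrec (k + 1) (by omega)
  have hvv := vv_succ (c := c) hω k
  have hv2 := v0_ge_two hω hα
  have hL1 : (0 : ℝ) ≤ (gapLen ω (k + 1) : ℝ) := Nat.cast_nonneg _
  have halp : alp c * (c * (gapLen ω (k + 1) : ℝ) ^ 2)
      = (alp c - 1) * (gapLen ω (k + 1) : ℝ) ^ 2 := by
    rw [halc]; ring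
  rcases Nat.eq_zero_or_pos k with rfl | hk
  · -- j = 1
    have hvv0 : vv ω c 0 = v0 ω c := by simp [vv, Finset.Icc_eq_empty_of_lt]
    rw [hvv, hvv0, hrecj]
    have hg0 : (0:ℝ) ≤ alp c * (gapLen ω (0 + 1) : ℝ) := mul_nonneg (by linarith) hL1
    have hv0e : v0 ω c = 2 * alp c * (gapLen ω 1 : ℝ) + 2 * (gapLen ω 1 : ℝ) + 2 := rfl
    have h01 : ((gapLen ω (0 + 1) : ℕ) : ℝ) = ((gapLen ω 1 : ℕ) : ℝ) := by norm_num
    rw [h01] at *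
    linarith
  · -- j ≥ 2
    have hreck : (gapLen ω (k + 1) : ℝ) = c * (gapLen ω k : ℝ) ^ 2 := hrec k hk
    have hsingle : (gapLen ω k : ℝ) ^ 2 ≤ ∑ m ∈ Finset.Icc 1 k, ((gapLen ω m : ℝ)) ^ 2 :=
      Finset.single_le_sum (f := fun m => ((gapLen ω m : ℝ))^2)
        (fun m _ => sq_nonneg _) (Finset.mem_Icc.mpr ⟨hk, le_rfl⟩)
    have hvvk : v0 ω c + (alp c - 1) * (gapLen ω k : ℝ) ^ 2 ≤ vv ω c k := by
      simp only [vv]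
      nlinarith
    rw [hvv, hrecj]
    have hLk : (0 : ℝ) ≤ (gapLen ω k : ℝ) := Nat.cast_nonneg _
    have hkey : (2 - alp c) * (gapLen ω (k + 1) : ℝ) ≤ (alp c - 1) * (gapLen ω k : ℝ) ^ 2 := by
      rw [hreck, halc]
      nlinarith [sq_nonneg ((gapLen ω k : ℝ))]
    linarith

lemma drift_zero (hI : 3 ≤ gapLen ω 1) : 2 * fL ω c 1 + 3 ≤ 3 * fL ω c 0 := by
  have hg1 : (1 : ℕ) ≤ gapLen ω (0 + 1) := one_le_gap hω 0
  have hf1 := fL_formula (c := c) hω hg1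
  have hf0 := fL_formula (c := c) (j := 0) (t := 0) hω (Nat.zero_le _)
  rw [trapLoc_zero hω] at hf1 hf0
  norm_num at hf1 hf0
  have hvv0 : vv ω c 0 = v0 ω c := by simp [vv, Finset.Icc_eq_empty_of_lt]
  have hL1 : (0 : ℝ) ≤ (gapLen ω 1 : ℝ) := Nat.cast_nonneg _
  have hαL : 0 ≤ (alp c - 1) * (gapLen ω 1 : ℝ) := mul_nonneg (by linarith) hL1
  have hv0e : v0 ω c = 2 * alp c * (gapLen ω 1 : ℝ) + 2 * (gapLen ω 1 : ℝ) + 2 := rfl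
  rw [hf1, hf0, hvv0]
  nlinarith

lemma drift_nontrap {x : ℕ} (hx1 : 1 ≤ x) (hx : ¬ ω x = true) :
    fL ω c (x - 1) + fL ω c (x + 1) + 2 ≤ 2 * fL ω c x := by
  have h1 : trapLoc ω (Jx ω x) < x := trapLoc_Jx_lt_of_nontrap hω hx
  have h2 : x < trapLoc ω (Jx ω x + 1) := lt_trapLoc_Jx_succ hω x
  have hgap := trapLoc_add_gap hω (Jx ω x)
  obtain ⟨t, ht1, e2⟩ : ∃ t, 1 ≤ t ∧ x = trapLoc ω (Jx ω x) + t :=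
    ⟨x - trapLoc ω (Jx ω x), by omega, by omega⟩
  have ht2 : t + 1 ≤ gapLen ω (Jx ω x + 1) := by omega
  have e1 : x - 1 = trapLoc ω (Jx ω x) + (t - 1) := by omega
  have e3 : x + 1 = trapLoc ω (Jx ω x) + (t + 1) := by omega
  have hfm := fL_formula (c := c) (j := Jx ω x) (t := t - 1) hω (by omega)
  have hfp := fL_formula (c := c) (j := Jx ω x) (t := t + 1) hω ht2
  rw [e1, e3, hfm, hfp]
  have hfx := fL_formula (c := c) (j := Jx ω x) (t := t) hω (by omega)
  have e2'' : fL ω c x = fL ω c (trapLoc ω (Jx ω x) + t) := by rw [← e2]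
  rw [e2'', hfx]
  have c1 : ((t - 1 : ℕ) : ℝ) = (t : ℝ) - 1 := by
    have : (1:ℕ) ≤ t := ht1
    push_cast [Nat.cast_sub this]; ring
  have c2 : ((t + 1 : ℕ) : ℝ) = (t : ℝ) + 1 := by push_cast; ring
  rw [c1, c2]
  have exp1 : ((t:ℝ) - 1)^2 = (t:ℝ)^2 - 2*(t:ℝ) + 1 := by ring
  have exp2 : ((t:ℝ) + 1)^2 = (t:ℝ)^2 + 2*(t:ℝ) + 1 := by ring
  nlinarith [exp1, exp2]

lemma drift_trap {x : ℕ} (hx1 : 1 ≤ x) (hx : ω x = true) :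
    fL ω c (x - 1) + fL ω c (x + 1) + 3 ≤ 3 * fL ω c x := by
  obtain ⟨j, hxj⟩ : ∃ j, trapLoc ω j = x := ⟨Jx ω x, trapLoc_Jx_eq_of_trap hω hx⟩
  have hj1 : 1 ≤ j := by
    rcases Nat.eq_zero_or_pos j with rfl | h
    · exfalso; rw [trapLoc_zero hω] at hxj; omega
    · exact h
  obtain ⟨k, rfl⟩ : ∃ k, j = k + 1 := ⟨j - 1, by omega⟩
  subst hxj
  have hgap := trapLoc_add_gap hω k
  have hgap1 : 1 ≤ gapLen ω (k + 1) := one_le_gap hω k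
  have e1 : trapLoc ω (k + 1) - 1 = trapLoc ω k + (gapLen ω (k + 1) - 1) := by omega
  have hfm := fL_formula (c := c) (j := k) (t := gapLen ω (k + 1) - 1) hω (by omega)
  have hfp := fL_formula (c := c) (j := k + 1) (t := 1) hω (one_le_gap hω (k + 1))
  have hf0 := fL_formula (c := c) (j := k + 1) (t := 0) hω (Nat.zero_le _)
  have hf0' : fL ω c (trapLoc ω (k + 1)) = vv ω c (k + 1) := by
    simpa using hf0
  rw [e1, hfm, hfp, hf0']
  have hA := condA hω hα halc hc0 hrec (j := k + 1) (by omega)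
  have hvv := vv_succ (c := c) hω k
  have c1 : ((gapLen ω (k + 1) - 1 : ℕ) : ℝ) = (gapLen ω (k + 1) : ℝ) - 1 := by
    push_cast [Nat.cast_sub hgap1]; ring
  rw [c1]
  have exp1 : ((gapLen ω (k+1):ℝ) - 1)^2
      = (gapLen ω (k+1):ℝ)^2 - 2*(gapLen ω (k+1):ℝ) + 1 := by ring
  have exp2 : alp c * (gapLen ω (k+1) : ℝ) * ((gapLen ω (k+1):ℝ) - 1)
      = alp c * (gapLen ω (k+1):ℝ)^2 - alp c * (gapLen ω (k+1):ℝ) := by ring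
  have exp3 : (alp c - 1) * (gapLen ω (k+1):ℝ)^2
      = alp c * (gapLen ω (k+1):ℝ)^2 - (gapLen ω (k+1):ℝ)^2 := by ring
  norm_num
  linarith [hA, hvv, exp1, exp2, exp3]

end Drift

end TRW

section ProbDefs

open scoped ENNReal

noncomputable def TRWfopt (ω : ℕ → Bool) (c : ℝ) : Option ℕ → ℝ≥0∞ :=
  fun z => ENNReal.ofReal (z.elim 0 (TRW.fL ω c))

noncomputable def TRWdind : Option ℕ → ℝ≥0∞ := fun z => z.elim 0 (fun _ => 1)


theorem TRWdrift_master {ω : ℕ → Bool} {c : ℝ} (hω : IsTrapConfig ω) (hα : 1 ≤ TRW.alp c)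
    (halc : TRW.alp c - 1 = c * TRW.alp c) (hc0 : 0 < c) (hrec : QuadRec ω c)
    (hI : 3 ≤ gapLen ω 1) (z : Option ℕ) :
    (∑' y : Option ℕ, TRWfopt ω c y * ENNReal.ofReal (transProb ω z y)) + TRWdind z
      ≤ TRWfopt ω c z := by
  have hnn : ∀ m : ℕ, 0 ≤ TRW.fL ω c m := TRW.fL_nonneg hω hα
  cases z with
  | none =>
    have h0 : ∀ y : Option ℕ, TRWfopt ω c y * ENNReal.ofReal (transProb ω none y) = 0 := by
      intro y
      cases y with
      | none => simp [TRWfopt]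
      | some m => simp [transProb]
    rw [tsum_congr h0, tsum_zero]
    simp [TRWdind, TRWfopt]
  | some x =>
    rcases Nat.eq_zero_or_pos x with rfl | hx1
    · -- x = 0
      have hsingle : ∀ y : Option ℕ, y ≠ some 1 →
          TRWfopt ω c y * ENNReal.ofReal (transProb ω (some 0) y) = 0 := by
        intro y hy
        cases y with
        | none => simp [TRWfopt]
        | some m =>
          have hm : m ≠ 1 := by simpa using hy
          simp [transProb, hm]
      rw [tsum_eq_single (some 1) hsingle]
      have ht : transProb ω (some 0) (some 1) = 2 / 3 := by simp [transProb]
      rw [ht]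
      have e1 : TRWfopt ω c (some 1) = ENNReal.ofReal (TRW.fL ω c 1) := rfl
      have e0 : TRWfopt ω c (some 0) = ENNReal.ofReal (TRW.fL ω c 0) := rfl
      have ed : TRWdind (some 0) = 1 := rfl
      rw [e1, e0, ed, ← ENNReal.ofReal_mul (hnn 1), ← ENNReal.ofReal_one,
        ← ENNReal.ofReal_add (mul_nonneg (hnn 1) (by norm_num)) zero_le_one]
      refine ENNReal.ofReal_le_ofReal ?_
      have := TRW.drift_zero hω hα halc hc0 hrec hI
      linarith
    · -- x ≥ 1
      have hne : (some (x - 1) : Option ℕ) ≠ some (x + 1) := by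
        simp only [ne_eq, Option.some.injEq]; omega
      have hx0 : ¬ (x = 0) := by omega
      set g : Option ℕ → ℝ≥0∞ :=
        fun y => TRWfopt ω c y * ENNReal.ofReal (transProb ω (some x) y) with hg
      have hvanish : ∀ y ∉ ({some (x - 1), some (x + 1)} : Finset (Option ℕ)), g y = 0 := by
        intro y hy
        rw [Finset.mem_insert, Finset.mem_singleton] at hy
        push_neg at hy
        cases y with
        | none => simp [hg, TRWfopt]
        | some m =>
          have hm1 : m ≠ x - 1 := by intro h; exact hy.1 (by rw [h])
          have hm2 : m ≠ x + 1 := by intro h; exact hy.2 (by rw [h])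
          have : ¬ (m = x - 1 ∨ m = x + 1) := by tauto
          simp [hg, transProb, hx0, this]
      rw [tsum_eq_sum hvanish, Finset.sum_pair hne]
      by_cases hxt : ω x = true
      · have t1 : transProb ω (some x) (some (x - 1)) = 1 / 3 := by
          simp [transProb, hx0, hxt]
        have t2 : transProb ω (some x) (some (x + 1)) = 1 / 3 := by
          simp [transProb, hx0, hxt]
        have e1 : g (some (x - 1)) = ENNReal.ofReal (TRW.fL ω c (x - 1) * (1 / 3)) := by
          rw [hg]; simp only; rw [t1, ENNReal.ofReal_mul (hnn _)]; rfl
        have e2 : g (some (x + 1)) = ENNReal.ofReal (TRW.fL ω c (x + 1) * (1 / 3)) := by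
          rw [hg]; simp only; rw [t2, ENNReal.ofReal_mul (hnn _)]; rfl
        have ed : TRWdind (some x) = 1 := rfl
        rw [e1, e2, ed, ← ENNReal.ofReal_add (mul_nonneg (hnn _) (by norm_num))
            (mul_nonneg (hnn _) (by norm_num)), ← ENNReal.ofReal_one,
          ← ENNReal.ofReal_add (add_nonneg (mul_nonneg (hnn _) (by norm_num))
            (mul_nonneg (hnn _) (by norm_num))) zero_le_one]
        refine ENNReal.ofReal_le_ofReal ?_
        simp only [Option.elim_some]
        have := TRW.drift_trap hω hα halc hc0 hrec hx1 hxt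
        linarith
      · have t1 : transProb ω (some x) (some (x - 1)) = 1 / 2 := by
          simp [transProb, hx0, hxt]
        have t2 : transProb ω (some x) (some (x + 1)) = 1 / 2 := by
          simp [transProb, hx0, hxt]
        have e1 : g (some (x - 1)) = ENNReal.ofReal (TRW.fL ω c (x - 1) * (1 / 2)) := by
          rw [hg]; simp only; rw [t1, ENNReal.ofReal_mul (hnn _)]; rfl
        have e2 : g (some (x + 1)) = ENNReal.ofReal (TRW.fL ω c (x + 1) * (1 / 2)) := by
          rw [hg]; simp only; rw [t2, ENNReal.ofReal_mul (hnn _)]; rfl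
        have ed : TRWdind (some x) = 1 := rfl
        rw [e1, e2, ed, ← ENNReal.ofReal_add (mul_nonneg (hnn _) (by norm_num))
            (mul_nonneg (hnn _) (by norm_num)), ← ENNReal.ofReal_one,
          ← ENNReal.ofReal_add (add_nonneg (mul_nonneg (hnn _) (by norm_num))
            (mul_nonneg (hnn _) (by norm_num))) zero_le_one]
        refine ENNReal.ofReal_le_ofReal ?_
        simp only [Option.elim_some]
        have := TRW.drift_nontrap hω hα halc hc0 hrec hx1 hxt
        linarith

end ProbDefs

section ProbPart

open MeasureTheory

variable {Ω : Type*} [MeasurableSpace Ω]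

def TRWcyl (S : ℕ → Ω → Option ℕ) (n : ℕ) (p : ℕ → Option ℕ) : Set Ω :=
  {a | ∀ i ≤ n, S i a = p i}

def TRWext (n : ℕ) (v : Fin (n + 1) → Option ℕ) : ℕ → Option ℕ :=
  fun i => if h : i ≤ n then v ⟨i, Nat.lt_succ_of_le h⟩ else none

noncomputable def TRWFsum (ω : ℕ → Bool) (c : ℝ) (P : Measure Ω) (S : ℕ → Ω → Option ℕ)
    (n : ℕ) : ℝ≥0∞ :=
  ∑' v : Fin (n + 1) → Option ℕ,
    TRWfopt ω c (v (Fin.last n)) * P (TRWcyl S n (TRWext n v))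

lemma TRWext_le {n i : ℕ} (hi : i ≤ n) (v : Fin (n + 1) → Option ℕ) :
    TRWext n v i = v ⟨i, Nat.lt_succ_of_le hi⟩ := dif_pos hi

lemma TRWext_snoc_le {n i : ℕ} (hi : i ≤ n) (v : Fin (n + 1) → Option ℕ) (y : Option ℕ) :
    TRWext (n + 1) (Fin.snoc v y) i = TRWext n v i := by
  rw [TRWext_le (by omega : i ≤ n + 1), TRWext_le hi]
  have e : (⟨i, Nat.lt_succ_of_le (by omega : i ≤ n + 1)⟩ : Fin (n + 2))
      = Fin.castSucc ⟨i, Nat.lt_succ_of_le hi⟩ := rfl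
  rw [e, Fin.snoc_castSucc]

lemma TRWext_snoc_last {n : ℕ} (v : Fin (n + 1) → Option ℕ) (y : Option ℕ) :
    TRWext (n + 1) (Fin.snoc v y) (n + 1) = y := by
  rw [TRWext_le (le_refl (n + 1))]
  have e : (⟨n + 1, Nat.lt_succ_of_le (le_refl (n + 1))⟩ : Fin (n + 2)) = Fin.last (n + 1) := rfl
  rw [e, Fin.snoc_last]

lemma TRWext_last {n : ℕ} (v : Fin (n + 1) → Option ℕ) :
    TRWext n v n = v (Fin.last n) := by
  rw [TRWext_le (le_refl n)]; rfl

lemma TRWcyl_snoc (S : ℕ → Ω → Option ℕ) (n : ℕ) (v : Fin (n + 1) → Option ℕ)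
    (y : Option ℕ) :
    TRWcyl S (n + 1) (TRWext (n + 1) (Fin.snoc v y))
      = {a | (∀ i ≤ n, S i a = TRWext n v i) ∧ S (n + 1) a = y} := by
  ext a
  simp only [TRWcyl, Set.mem_setOf_eq]
  constructor
  · intro h
    refine ⟨fun i hi => ?_, ?_⟩
    · rw [h i (by omega), TRWext_snoc_le hi]
    · rw [h (n + 1) le_rfl, TRWext_snoc_last]
  · rintro ⟨h1, h2⟩ i hi
    rcases le_or_gt i n with h | h
    · rw [TRWext_snoc_le h]; exact h1 i h
    · have : i = n + 1 := by omega
      subst this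
      rw [TRWext_snoc_last]; exact h2

variable {ω : ℕ → Bool} {c : ℝ} {P : Measure Ω} {S : ℕ → Ω → Option ℕ}

lemma TRWFsum_step
    (hmark : ∀ (n : ℕ) (path : ℕ → Option ℕ) (y : Option ℕ),
      P {a | (∀ i ≤ n, S i a = path i) ∧ S (n + 1) a = y}
        = ENNReal.ofReal (transProb ω (path n) y) * P {a | ∀ i ≤ n, S i a = path i})
    (hdrift : ∀ z : Option ℕ,
      (∑' y : Option ℕ, TRWfopt ω c y * ENNReal.ofReal (transProb ω z y)) + TRWdind z
        ≤ TRWfopt ω c z)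
    (n : ℕ) :
    TRWFsum ω c P S (n + 1) + P {a | S n a ≠ none} ≤ TRWFsum ω c P S n := by
  classical
  have hterm : ∀ (v : Fin (n + 1) → Option ℕ) (y : Option ℕ),
      TRWfopt ω c ((Fin.snoc v y : Fin (n + 2) → Option ℕ) (Fin.last (n + 1)))
        * P (TRWcyl S (n + 1) (TRWext (n + 1) (Fin.snoc v y)))
      = TRWfopt ω c y * (ENNReal.ofReal (transProb ω (v (Fin.last n)) y)
          * P (TRWcyl S n (TRWext n v))) := by
    intro v y
    rw [Fin.snoc_last, TRWcyl_snoc, hmark n (TRWext n v) y, TRWext_last]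
    rfl
  have h1 : TRWFsum ω c P S (n + 1)
      = ∑' (v : Fin (n + 1) → Option ℕ),
          (∑' (y : Option ℕ), TRWfopt ω c y
              * ENNReal.ofReal (transProb ω (v (Fin.last n)) y))
            * P (TRWcyl S n (TRWext n v)) := by
    calc TRWFsum ω c P S (n + 1)
        = ∑' (q : Option ℕ × (Fin (n + 1) → Option ℕ)),
            TRWfopt ω c (((Fin.snocEquiv (fun _ => Option ℕ)) q) (Fin.last (n + 1)))
              * P (TRWcyl S (n + 1) (TRWext (n + 1) ((Fin.snocEquiv (fun _ => Option ℕ)) q))) :=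
          (Equiv.tsum_eq (Fin.snocEquiv (fun _ => Option ℕ)) _).symm
      _ = ∑' (y : Option ℕ), ∑' (v : Fin (n + 1) → Option ℕ),
            TRWfopt ω c y * (ENNReal.ofReal (transProb ω (v (Fin.last n)) y)
              * P (TRWcyl S n (TRWext n v))) := by
          rw [ENNReal.tsum_prod']
          exact tsum_congr fun y => tsum_congr fun v => hterm v y
      _ = ∑' (v : Fin (n + 1) → Option ℕ), ∑' (y : Option ℕ),
            TRWfopt ω c y * (ENNReal.ofReal (transProb ω (v (Fin.last n)) y)
              * P (TRWcyl S n (TRWext n v))) := ENNReal.tsum_comm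
      _ = _ := by
          refine tsum_congr fun v => ?_
          calc ∑' (y : Option ℕ), TRWfopt ω c y
                * (ENNReal.ofReal (transProb ω (v (Fin.last n)) y)
                  * P (TRWcyl S n (TRWext n v)))
              = ∑' (y : Option ℕ), (TRWfopt ω c y
                  * ENNReal.ofReal (transProb ω (v (Fin.last n)) y))
                  * P (TRWcyl S n (TRWext n v)) :=
                tsum_congr fun y => (mul_assoc _ _ _).symm
            _ = _ := ENNReal.tsum_mul_right
  have h2 : ∀ v : Fin (n + 1) → Option ℕ,
      (∑' (y : Option ℕ), TRWfopt ω c y * ENNReal.ofReal (transProb ω (v (Fin.last n)) y))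
          * P (TRWcyl S n (TRWext n v))
        + TRWdind (v (Fin.last n)) * P (TRWcyl S n (TRWext n v))
      ≤ TRWfopt ω c (v (Fin.last n)) * P (TRWcyl S n (TRWext n v)) := by
    intro v
    rw [← add_mul]
    exact mul_le_mul_left (hdrift _) _
  have h3 : TRWFsum ω c P S (n + 1)
      + ∑' (v : Fin (n + 1) → Option ℕ), TRWdind (v (Fin.last n)) * P (TRWcyl S n (TRWext n v))
      ≤ TRWFsum ω c P S n := by
    rw [h1, ← ENNReal.tsum_add]
    exact ENNReal.tsum_le_tsum h2
  have h4 : P {a | S n a ≠ none}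
      ≤ ∑' (v : Fin (n + 1) → Option ℕ), TRWdind (v (Fin.last n)) * P (TRWcyl S n (TRWext n v)) := by
    set T : Set (Fin (n + 1) → Option ℕ) := {v | v (Fin.last n) ≠ none} with hT
    have hsub : {a | S n a ≠ none} ⊆ ⋃ v : T, TRWcyl S n (TRWext n v.1) := by
      intro a ha
      refine Set.mem_iUnion.mpr ⟨⟨fun i => S i.1 a, ha⟩, fun i hi => ?_⟩
      rw [TRWext_le hi]
    calc P {a | S n a ≠ none} ≤ P (⋃ v : T, TRWcyl S n (TRWext n v.1)) := measure_mono hsub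
      _ ≤ ∑' v : T, P (TRWcyl S n (TRWext n v.1)) := measure_iUnion_le _
      _ = ∑' v : T, TRWdind (v.1 (Fin.last n)) * P (TRWcyl S n (TRWext n v.1)) := by
          refine tsum_congr fun v => ?_
          obtain ⟨m, hm⟩ := Option.ne_none_iff_exists'.mp v.2
          rw [hm, show TRWdind (some m) = 1 from rfl, one_mul]
      _ ≤ _ := by
          rw [tsum_subtype T (fun v => TRWdind (v (Fin.last n)) * P (TRWcyl S n (TRWext n v)))]
          exact ENNReal.tsum_le_tsum fun v => Set.indicator_le_self _ _ _
  calc TRWFsum ω c P S (n + 1) + P {a | S n a ≠ none}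
      ≤ TRWFsum ω c P S (n + 1)
        + ∑' (v : Fin (n + 1) → Option ℕ), TRWdind (v (Fin.last n)) * P (TRWcyl S n (TRWext n v)) :=
        add_le_add_right h4 _
    _ ≤ TRWFsum ω c P S n := h3

lemma TRWmaster
    (hmark : ∀ (n : ℕ) (path : ℕ → Option ℕ) (y : Option ℕ),
      P {a | (∀ i ≤ n, S i a = path i) ∧ S (n + 1) a = y}
        = ENNReal.ofReal (transProb ω (path n) y) * P {a | ∀ i ≤ n, S i a = path i})
    (hdrift : ∀ z : Option ℕ,
      (∑' y : Option ℕ, TRWfopt ω c y * ENNReal.ofReal (transProb ω z y)) + TRWdind z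
        ≤ TRWfopt ω c z)
    (n : ℕ) :
    (∑ k ∈ Finset.range n, P {a | S k a ≠ none}) + TRWFsum ω c P S n ≤ TRWFsum ω c P S 0 := by
  induction n with
  | zero => simp
  | succ n ih =>
    rw [Finset.sum_range_succ]
    calc (∑ k ∈ Finset.range n, P {a | S k a ≠ none}) + P {a | S n a ≠ none}
          + TRWFsum ω c P S (n + 1)
        = (∑ k ∈ Finset.range n, P {a | S k a ≠ none})
          + (TRWFsum ω c P S (n + 1) + P {a | S n a ≠ none}) := by ring
      _ ≤ (∑ k ∈ Finset.range n, P {a | S k a ≠ none}) + TRWFsum ω c P S n :=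
          add_le_add_right (TRWFsum_step hmark hdrift n) _
      _ ≤ TRWFsum ω c P S 0 := ih

lemma TRWFsum_zero (hmeas : ∀ (n : ℕ) (y : Option ℕ), MeasurableSet {a | S n a = y})
    (hprob : IsProbabilityMeasure P) (hstart : P {a | S 0 a = some 0} = 1) :
    TRWFsum ω c P S 0 = ENNReal.ofReal (TRW.fL ω c 0) := by
  haveI := hprob
  have hcyl : ∀ z : Option ℕ, TRWcyl S 0 (TRWext 0 (fun _ => z)) = {a | S 0 a = z} := by
    intro z
    ext a
    simp only [TRWcyl, Set.mem_setOf_eq]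
    constructor
    · intro h
      have := h 0 le_rfl
      rwa [TRWext_le le_rfl] at this
    · intro h i hi
      have hiz : i = 0 := by omega
      subst hiz
      rw [TRWext_le le_rfl]
      exact h
  have hterm : ∀ z : Option ℕ,
      TRWfopt ω c (((Equiv.funUnique (Fin 1) (Option ℕ)).symm z) (Fin.last 0))
        * P (TRWcyl S 0 (TRWext 0 ((Equiv.funUnique (Fin 1) (Option ℕ)).symm z)))
      = TRWfopt ω c z * P {a | S 0 a = z} := by
    intro z
    have h1 : ((Equiv.funUnique (Fin 1) (Option ℕ)).symm z) = (fun _ : Fin 1 => z) := rfl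
    rw [h1, hcyl z]
  have hcompl : P {a | S 0 a = some 0}ᶜ = 0 := by
    have := measure_compl (hmeas 0 (some 0)) (measure_ne_top P _)
    rw [hstart] at this
    simpa [measure_univ] using this
  calc TRWFsum ω c P S 0
      = ∑' z : Option ℕ,
          TRWfopt ω c (((Equiv.funUnique (Fin 1) (Option ℕ)).symm z) (Fin.last 0))
            * P (TRWcyl S 0 (TRWext 0 ((Equiv.funUnique (Fin 1) (Option ℕ)).symm z))) :=
        (Equiv.tsum_eq (Equiv.funUnique (Fin 1) (Option ℕ)).symm _).symm
    _ = ∑' z : Option ℕ, TRWfopt ω c z * P {a | S 0 a = z} := tsum_congr hterm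
    _ = TRWfopt ω c (some 0) * P {a | S 0 a = some 0} := by
        refine tsum_eq_single (some 0) fun z hz => ?_
        have hsub : {a | S 0 a = z} ⊆ {a | S 0 a = some 0}ᶜ := by
          intro a ha hmem
          exact hz (by rw [← ha, hmem])
        have : P {a | S 0 a = z} = 0 :=
          le_antisymm (hcompl ▸ measure_mono hsub) zero_le
        rw [this, mul_zero]
    _ = ENNReal.ofReal (TRW.fL ω c 0) := by
        rw [hstart, mul_one]; rfl

end ProbPart

section Surv


lemma TRWsurv_lt_iff {Ω : Type*} (S : ℕ → Ω → Option ℕ) (a : Ω) (k : ℕ) :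
    (k : ℕ∞) < survivalTime S a ↔ ∀ j ≤ k, S j a ≠ none := by
  constructor
  · intro h j hj hnone
    have hmem : ((j : ℕ∞)) ∈ {t : ℕ∞ | ∃ k' : ℕ, (k' : ℕ∞) = t ∧ S k' a = none} :=
      ⟨j, rfl, hnone⟩
    have h2 : survivalTime S a ≤ (j : ℕ∞) := sInf_le hmem
    have h3 : (j : ℕ∞) ≤ (k : ℕ∞) := by exact_mod_cast hj
    exact absurd ((h.trans_le h2).trans_le h3) (lt_irrefl _)
  · intro h
    have h1 : ((k + 1 : ℕ) : ℕ∞) ≤ survivalTime S a := by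
      refine le_sInf fun t ht => ?_
      obtain ⟨k', rfl, hk'⟩ := ht
      have hgt : k + 1 ≤ k' := by
        by_contra hle
        exact h k' (by omega) hk'
      exact_mod_cast hgt
    calc (k : ℕ∞) < ((k + 1 : ℕ) : ℕ∞) := by exact_mod_cast Nat.lt_succ_self k
      _ ≤ _ := h1

lemma TRWenat_tsum (t : ℕ∞) :
    (t : ℝ≥0∞) = ∑' k : ℕ, (if (k : ℕ∞) < t then (1 : ℝ≥0∞) else 0) := by
  induction t using ENat.recTopCoe with
  | top =>
    rw [ENat.toENNReal_top]
    have hall : ∀ k : ℕ, (if (k : ℕ∞) < (⊤ : ℕ∞) then (1 : ℝ≥0∞) else 0) = 1 := by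
      intro k
      rw [if_pos (lt_of_le_of_ne le_top (by simp))]
    rw [tsum_congr hall]
    exact (ENNReal.tsum_const_eq_top_of_ne_zero one_ne_zero).symm
  | coe m =>
    rw [ENat.toENNReal_coe]
    have hvan : ∀ k ∉ Finset.range m, (if ((k : ℕ∞) < (m : ℕ∞)) then (1 : ℝ≥0∞) else 0) = 0 := by
      intro k hk
      rw [Finset.mem_range] at hk
      rw [if_neg]
      intro hlt
      exact hk (by exact_mod_cast hlt)
    rw [tsum_eq_sum hvan,
      Finset.sum_congr rfl (fun k hk => if_pos (by exact_mod_cast Finset.mem_range.mp hk))]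
    simp

lemma TRWsurvSet_meas {Ω : Type*} [MeasurableSpace Ω] {S : ℕ → Ω → Option ℕ}
    (hmeas : ∀ (n : ℕ) (y : Option ℕ), MeasurableSet {a | S n a = y}) (k : ℕ) :
    MeasurableSet {a : Ω | (k : ℕ∞) < survivalTime S a} := by
  have he : {a : Ω | (k : ℕ∞) < survivalTime S a} = ⋂ j ∈ Set.Iic k, {a | S j a = none}ᶜ := by
    ext a
    simp only [Set.mem_setOf_eq, Set.mem_iInter, Set.mem_compl_iff, Set.mem_Iic]
    exact TRWsurv_lt_iff S a k
  rw [he]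
  exact MeasurableSet.biInter (Set.to_countable _) fun j _ => (hmeas j none).compl

end Surv

end TRWAux


/-- if `|I_1| ≥ 3` and the quadratic recursion holds with
`|I_1|⁻¹ < c < (|I_1| + √(|I_1|² - 8)) / (2|I_1|)`, then `𝔼(τ) < ∞`. -/
theorem expSurvival_lt_top_of_c_lt_root
    (ω : ℕ → Bool) (hω : IsTrapConfig ω) (hI : 3 ≤ gapLen ω 1)
    (c : ℝ) (hrec : QuadRec ω c)
    (hc_low : ((gapLen ω 1 : ℝ))⁻¹ < c)
    (hc_up : c < ((gapLen ω 1 : ℝ) + Real.sqrt ((gapLen ω 1 : ℝ) ^ 2 - 8))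
      / (2 * (gapLen ω 1 : ℝ)))
    {Ω : Type*} [MeasurableSpace Ω] (P : MeasureTheory.Measure Ω)
    (S : ℕ → Ω → Option ℕ) (hS : IsTrappedRW ω P S) :
    expSurvival P S < ⊤ := by
  obtain ⟨hprob, hmeas, hstart, hmark⟩ := hS
  -- analytic facts about c
  have hn3 : (3 : ℝ) ≤ (gapLen ω 1 : ℝ) := by exact_mod_cast hI
  have hnpos : (0 : ℝ) < (gapLen ω 1 : ℝ) := by linarith
  have hc0 : 0 < c := lt_trans (inv_pos.mpr hnpos) hc_low
  have hsq : Real.sqrt ((gapLen ω 1 : ℝ) ^ 2 - 8) < (gapLen ω 1 : ℝ) :=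
    (Real.sqrt_lt' hnpos).mpr (by nlinarith)
  have hroot1 : ((gapLen ω 1 : ℝ) + Real.sqrt ((gapLen ω 1 : ℝ) ^ 2 - 8))
      / (2 * (gapLen ω 1 : ℝ)) < 1 := by
    rw [div_lt_one (by positivity)]
    linarith
  have hc1 : c < 1 := lt_trans hc_up hroot1
  have h1c : (0 : ℝ) < 1 - c := by linarith
  have hmul : (1 - c) * TRW.alp c = 1 := mul_inv_cancel₀ (ne_of_gt h1c)
  have halp_pos : 0 < TRW.alp c := inv_pos.mpr h1c
  have halc : TRW.alp c - 1 = c * TRW.alp c := by nlinarith [hmul]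
  have hα : 1 ≤ TRW.alp c := by nlinarith [mul_pos hc0 halp_pos]
  -- drift inequality
  have hdrift := TRWdrift_master hω hα halc hc0 hrec hI
  -- survival time measurability and expansion
  have hτmeas : ∀ k : ℕ, MeasurableSet {a : Ω | (k : ℕ∞) < survivalTime S a} :=
    TRWsurvSet_meas hmeas
  have hexp : expSurvival P S = ∑' k : ℕ, P {a : Ω | (k : ℕ∞) < survivalTime S a} := by
    rw [expSurvival]
    have hpt : ∀ a : Ω, ((survivalTime S a : ℕ∞) : ℝ≥0∞)
        = ∑' k : ℕ, Set.indicator {a' : Ω | (k : ℕ∞) < survivalTime S a'}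
            (fun _ => (1 : ℝ≥0∞)) a := by
      intro a
      rw [TRWenat_tsum (survivalTime S a)]
      refine tsum_congr fun k => ?_
      rw [Set.indicator_apply]
      simp only [Set.mem_setOf_eq]
    rw [lintegral_congr hpt,
      lintegral_tsum (fun k => (measurable_const.indicator (hτmeas k)).aemeasurable)]
    exact tsum_congr fun k => lintegral_indicator_one (hτmeas k)
  have hbound1 : ∀ k : ℕ, P {a : Ω | (k : ℕ∞) < survivalTime S a} ≤ P {a | S k a ≠ none} := by
    intro k
    exact measure_mono fun a ha => (TRWsurv_lt_iff S a k).mp ha k le_rfl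
  have hmaster := TRWmaster (ω := ω) (c := c) (P := P) (S := S) hmark hdrift
  have hsum : (∑' k : ℕ, P {a | S k a ≠ none}) ≤ TRWFsum ω c P S 0 := by
    rw [ENNReal.tsum_eq_iSup_nat]
    refine iSup_le fun n => ?_
    calc ∑ k ∈ Finset.range n, P {a | S k a ≠ none}
        ≤ (∑ k ∈ Finset.range n, P {a | S k a ≠ none}) + TRWFsum ω c P S n := le_self_add
      _ ≤ TRWFsum ω c P S 0 := hmaster n
  calc expSurvival P S = ∑' k : ℕ, P {a : Ω | (k : ℕ∞) < survivalTime S a} := hexp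
    _ ≤ ∑' k : ℕ, P {a | S k a ≠ none} := ENNReal.tsum_le_tsum hbound1
    _ ≤ TRWFsum ω c P S 0 := hsum
    _ = ENNReal.ofReal (TRW.fL ω c 0) := TRWFsum_zero hmeas hprob hstart
    _ < ⊤ := ENNReal.ofReal_lt_top
end
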